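/- arXiv:1807.07503 — 2 statements merged into one kernel-verified Lean document; each statement's English description precedes it below -/
import Mathlib

section
/- (Existence of interval maps with prescribed escape column, cf. Corollary 3.5(2).) For every n ≥ 2 and every nonzero vector u = (u_1,…,u_n) ∈ {0,1}^n, there exists a choice of partition points and a Markov interval map f on the corresponding interval I having exactly one nonempty escape interval E_k, such that for every i ∈ {1,…,n}: int I_i ∩ f^{-1}(E_k) ≠ ∅ if and only if u_i = 1 (that is, the escape transition matrix of f has a single escape column, equal to u). -/
open scoped Classical ENNReal

noncomputable section

/-- Partition and branch data for a Markov interval map with `n` Markov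
subintervals.  `cm j` is the point `c_j⁻` and `cp j` is `c_j⁺` (with
`cm 0 = cp 0 = c₀` and `cm n = cp n = c_n`).  `f` is the globally defined map,
`F j` is the branch of `f` on the `j`-th Markov interval (indexed by
`j = 0, …, n-1`, corresponding to the interval `I_{j+1}` of the paper) and
`F' j` is the derivative of that branch. -/
structure MarkovSystem (n : ℕ) where
  cm : ℕ → ℝ
  cp : ℕ → ℝ
  f : ℝ → ℝ
  F : ℕ → ℝ → ℝ
  F' : ℕ → ℝ → ℝ
  two_le : 2 ≤ n
  cm_zero : cm 0 = cp 0
  cm_n : cm n = cp n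
  cm_le_cp : ∀ j ≤ n, cm j ≤ cp j
  cp_lt_cm : ∀ j < n, cp j < cm (j + 1)

namespace MarkovSystem

variable {n : ℕ} (M : MarkovSystem n)

/-- The Markov interval `I_{j+1} = [c_j⁺, c_{j+1}⁻]` (for `j < n`). -/
def Ipart (j : ℕ) : Set ℝ := Set.Icc (M.cp j) (M.cm (j + 1))

/-- The escape interval `E_j = (c_j⁻, c_j⁺)` (for `1 ≤ j ≤ n-1`). -/
def Epart (j : ℕ) : Set ℝ := Set.Ioo (M.cm j) (M.cp j)

/-- The ambient interval `I = [c₀, c_n]`. -/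
def itv : Set ℝ := Set.Icc (M.cm 0) (M.cm n)

/-- The domain of `f`, namely `⋃_{j=1}^n I_j`. -/
def dom : Set ℝ := ⋃ j ∈ Finset.range n, M.Ipart j

/-- The set `Γ` of partition boundary points. -/
def Gamma : Set ℝ := {y | ∃ j ≤ n, y = M.cm j ∨ y = M.cp j}

/-- `q`-fold image of a set under `f`, applying `f` only where it is defined. -/
def iterImage : ℕ → Set ℝ → Set ℝ
  | 0, S => S
  | q + 1, S => M.f '' (iterImage q S ∩ M.dom)

/-- `f^k(x)` is defined, i.e. all earlier iterates lie in the domain. -/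
def definedUpTo (k : ℕ) (x : ℝ) : Prop := ∀ l < k, M.f^[l] x ∈ M.dom

/-- The orbit equivalence relation `R_f`. -/
def Rrel (x y : ℝ) : Prop :=
  ∃ p q : ℕ, M.definedUpTo p x ∧ M.definedUpTo q y ∧ M.f^[p] x = M.f^[q] y

/-- The generalized orbit `R_f(x)` of a point `x ∈ I`. -/
def Rclass (x : ℝ) : Set ℝ := {y | y ∈ M.itv ∧ M.Rrel x y}

/-- The maximal invariant set `Ω_f`. -/
def Omega : Set ℝ := {x | x ∈ M.itv ∧ ∀ k, M.f^[k] x ∈ M.dom}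

/-- The escape set `E_f = I \ Ω_f`. -/
def Esc : Set ℝ := M.itv \ M.Omega

/-- The regular set `Λ_f = Ω_f \ R_f(Γ)`. -/
def Lambda : Set ℝ := {x | x ∈ M.Omega ∧ ∀ γ ∈ M.Gamma, ¬ M.Rrel x γ}

/-- The escape time of a point of the escape set. -/
def tau (x : ℝ) : ℕ := sInf {k | M.f^[k] x ∉ M.dom}

/-- The final escape point `e(x) = f^{τ(x)}(x)`. -/
def e (x : ℝ) : ℝ := M.f^[M.tau x] x

/-- The transition-matrix condition `a_{ij} = 1`, i.e. `f(int I_i) ⊇ int I_j`. -/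
def trans (i j : ℕ) : Prop := interior (M.Ipart j) ⊆ M.F i '' interior (M.Ipart i)

/-- The escape-transition condition `â_{ik} = 1`, i.e. `int I_i ∩ f⁻¹(E_k) ≠ ∅`. -/
def ahat (i k : ℕ) : Prop := (interior (M.Ipart i) ∩ M.F i ⁻¹' M.Epart k).Nonempty

end MarkovSystem

/-- The defining properties (P1)-(P4) of a Markov interval map, together with the
compatibility of the global map `f` with the branches `F j`:  `f` agrees with `F j`
on `I_j` except possibly at a boundary point shared with an adjacent interval,
where `f` is given by one of the two adjacent branches. -/
structure IsMarkov {n : ℕ} (M : MarkovSystem n) : Prop where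
  compat₁ : ∀ j < n, ∀ x ∈ M.Ipart j, (∀ k < n, k ≠ j → x ∉ M.Ipart k) → M.f x = M.F j x
  compat₂ : ∀ x ∈ M.dom, ∃ j, j < n ∧ x ∈ M.Ipart j ∧ M.f x = M.F j x
  maps_into : ∀ j < n, M.F j '' M.Ipart j ⊆ M.itv
  onto : M.itv ⊆ ⋃ j ∈ Finset.range n, M.F j '' M.Ipart j
  markov : ∀ i < n, ∃ S T : Set ℕ, S ⊆ {j | j < n} ∧ T ⊆ {j | 1 ≤ j ∧ j < n} ∧
    M.F i '' M.Ipart i = (⋃ j ∈ S, M.Ipart j) ∪ (⋃ j ∈ T, M.Epart j)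
  deriv : ∀ i < n, ∀ x ∈ M.Ipart i, HasDerivWithinAt (M.F i) (M.F' i x) (M.Ipart i) x
  derivCont : ∀ i < n, ContinuousOn (M.F' i) (M.Ipart i)
  mono : ∀ i < n, StrictMonoOn (M.F i) (M.Ipart i) ∨ StrictAntiOn (M.F i) (M.Ipart i)
  expansive : ∃ b > 1, ∀ i < n, ∀ x ∈ M.Ipart i, b < |M.F' i x|
  aperiodic : ∀ i < n, ∃ q, M.dom ⊆ M.iterImage q (M.Ipart i)


namespace EscapeCol
open Set

/-! ### Affine preimage helpers -/

lemma pre_inc_Icc {m q a b y : ℝ} (hm : 0 < m) (h1 : q ≤ y) (h2 : y ≤ q + m * (b - a)) :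
    ∃ x, x ∈ Set.Icc a b ∧ q + m * (x - a) = y := by
  have h3 : (y - q) / m ≤ b - a := by rw [div_le_iff₀ hm]; nlinarith
  have h4 : 0 ≤ (y - q) / m := div_nonneg (by linarith) hm.le
  exact ⟨a + (y - q) / m, ⟨by linarith, by linarith⟩, by field_simp; ring⟩

lemma pre_inc_Ioc {m q a b y : ℝ} (hm : 0 < m) (h1 : q < y) (h2 : y ≤ q + m * (b - a)) :
    ∃ x, x ∈ Set.Ioc a b ∧ q + m * (x - a) = y := by
  have h3 : (y - q) / m ≤ b - a := by rw [div_le_iff₀ hm]; nlinarith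
  have h4 : 0 < (y - q) / m := div_pos (by linarith) hm
  exact ⟨a + (y - q) / m, ⟨by linarith, by linarith⟩, by field_simp; ring⟩

lemma pre_dec_Icc {m q a b y : ℝ} (hm : 0 < m) (h1 : q - m * (b - a) ≤ y) (h2 : y ≤ q) :
    ∃ x, x ∈ Set.Icc a b ∧ q - m * (x - a) = y := by
  have h3 : (q - y) / m ≤ b - a := by rw [div_le_iff₀ hm]; nlinarith
  have h4 : 0 ≤ (q - y) / m := div_nonneg (by linarith) hm.le
  exact ⟨a + (q - y) / m, ⟨by linarith, by linarith⟩, by field_simp; ring⟩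

lemma pre_dec_Ioc {m q a b y : ℝ} (hm : 0 < m) (h1 : q - m * (b - a) ≤ y) (h2 : y < q) :
    ∃ x, x ∈ Set.Ioc a b ∧ q - m * (x - a) = y := by
  have h3 : (q - y) / m ≤ b - a := by rw [div_le_iff₀ hm]; nlinarith
  have h4 : 0 < (q - y) / m := div_pos (by linarith) hm
  exact ⟨a + (q - y) / m, ⟨by linarith, by linarith⟩, by field_simp; ring⟩

lemma pre_dec_Ioo {m q a b y : ℝ} (hm : 0 < m) (h1 : q - m * (b - a) < y) (h2 : y < q) :
    ∃ x, x ∈ Set.Ioo a b ∧ q - m * (x - a) = y := by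
  have h3 : (q - y) / m < b - a := by rw [div_lt_iff₀ hm]; nlinarith
  have h4 : 0 < (q - y) / m := div_pos (by linarith) hm
  exact ⟨a + (q - y) / m, ⟨by linarith, by linarith⟩, by field_simp; ring⟩

lemma hasDerivAt_inc (q m a x : ℝ) : HasDerivAt (fun y => q + m * (y - a)) m x := by
  simpa using (((hasDerivAt_id x).sub_const a).const_mul m).const_add q

lemma hasDerivAt_dec (q m a x : ℝ) : HasDerivAt (fun y => q - m * (y - a)) (-m) x := by
  simpa using (((hasDerivAt_id x).sub_const a).const_mul m).const_sub q

/-! ### Case A data: escape interval `E₁ = (1,2)`; `I₁ = [0,1]`, `I_{j+1} = [2j, 2j+2]`. -/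

def aA (i : ℕ) : ℝ := if i = 0 then 0 else 2 * i
def bA (i : ℕ) : ℝ := if i = 0 then 1 else 2 * i + 2
def mTA (n i : ℕ) : ℝ := if i = 0 then 2 * n else n
def mFA (n i : ℕ) : ℝ := if i = 0 then 2 * n - 2 else (n : ℝ) - 1

def FA (n : ℕ) (u : ℕ → Bool) (i : ℕ) (x : ℝ) : ℝ :=
  if u i then 2 * n - mTA n i * (x - aA i) else 2 + mFA n i * (x - aA i)

def FA' (n : ℕ) (u : ℕ → Bool) (i : ℕ) (_x : ℝ) : ℝ :=
  if u i then -mTA n i else mFA n i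

def JA (n : ℕ) (x : ℝ) : ℕ :=
  if x ≤ 1 then 0 else max 1 (min (n - 1) (⌈x / 2⌉ - 1).toNat)

variable {n : ℕ} {u : ℕ → Bool}

lemma mTA_pos (hn : 2 ≤ n) (i : ℕ) : 0 < mTA n i := by
  have : (2:ℝ) ≤ n := by exact_mod_cast hn
  unfold mTA; split <;> linarith

lemma mFA_pos (hn : 2 ≤ n) (i : ℕ) : 0 < mFA n i := by
  have : (2:ℝ) ≤ n := by exact_mod_cast hn
  unfold mFA; split <;> linarith

lemma aA_lt_bA (i : ℕ) : aA i < bA i := by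
  unfold aA bA; split <;> norm_num

lemma aA_nonneg (i : ℕ) : 0 ≤ aA i := by unfold aA; split <;> positivity

lemma two_le_aA {i : ℕ} (hi : 1 ≤ i) : (2:ℝ) ≤ aA i := by
  have : (1:ℝ) ≤ i := by exact_mod_cast hi
  unfold aA; rw [if_neg (by omega)]; linarith

lemma bA_le {i : ℕ} (hi : i < n) (hn : 2 ≤ n) : bA i ≤ 2 * n := by
  have h : (i:ℝ) + 1 ≤ n := by exact_mod_cast hi
  have : (2:ℝ) ≤ n := by exact_mod_cast hn
  unfold bA; split <;> linarith

lemma spanTA (i : ℕ) : mTA n i * (bA i - aA i) = 2 * n := by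
  unfold mTA bA aA; split <;> ring

lemma spanFA (i : ℕ) : mFA n i * (bA i - aA i) = 2 * n - 2 := by
  unfold mFA bA aA; split <;> ring

lemma FA_true_mem (hn : 2 ≤ n) {i : ℕ} (hu : u i = true) {x : ℝ}
    (hx : x ∈ Set.Icc (aA i) (bA i)) : FA n u i x ∈ Set.Icc (0:ℝ) (2 * n) := by
  have hm := mTA_pos hn i
  have hs := spanTA (n := n) i
  simp only [FA, hu, if_pos]
  obtain ⟨hx1, hx2⟩ := hx
  constructor
  · nlinarith
  · nlinarith

lemma FA_false_mem (hn : 2 ≤ n) {i : ℕ} (hu : u i = false) {x : ℝ}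
    (hx : x ∈ Set.Icc (aA i) (bA i)) : FA n u i x ∈ Set.Icc (2:ℝ) (2 * n) := by
  have hm := mFA_pos hn i
  have hs := spanFA (n := n) i
  simp only [FA, hu, Bool.false_eq_true, if_false]
  obtain ⟨hx1, hx2⟩ := hx
  constructor
  · nlinarith
  · nlinarith

lemma imgA_true (hn : 2 ≤ n) {i : ℕ} (hu : u i = true) :
    FA n u i '' Set.Icc (aA i) (bA i) = Set.Icc (0:ℝ) (2 * n) := by
  apply Set.Subset.antisymm
  · rintro _ ⟨x, hx, rfl⟩; exact FA_true_mem hn hu hx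
  · rintro y hy
    obtain ⟨x, hx, hxy⟩ := pre_dec_Icc (mTA_pos hn i) (a := aA i) (b := bA i)
      (by rw [spanTA]; simpa using hy.1) (hy.2)
    exact ⟨x, hx, by simp only [FA, hu, if_pos]; exact hxy⟩

lemma imgA_false (hn : 2 ≤ n) {i : ℕ} (hu : u i = false) :
    FA n u i '' Set.Icc (aA i) (bA i) = Set.Icc (2:ℝ) (2 * n) := by
  apply Set.Subset.antisymm
  · rintro _ ⟨x, hx, rfl⟩; exact FA_false_mem hn hu hx
  · rintro y hy
    obtain ⟨x, hx, hxy⟩ := pre_inc_Icc (mFA_pos hn i) (a := aA i) (b := bA i)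
      (hy.1) (by rw [spanFA]; simpa using hy.2)
    exact ⟨x, hx, by simp only [FA, hu, Bool.false_eq_true, if_false]; exact hxy⟩

/-- Covering `[2, 2n]` by the intervals `[2j, 2j+2]`, `1 ≤ j ≤ n-1`. -/
lemma coverA (hn : 2 ≤ n) {x : ℝ} (h2 : 2 ≤ x) (h2n : x ≤ 2 * n) :
    ∃ j : ℕ, 1 ≤ j ∧ j < n ∧ (2 * j : ℝ) ≤ x ∧ x ≤ 2 * j + 2 := by
  set z : ℤ := ⌈x / 2⌉ with hz
  have hz1 : 1 ≤ z := by
    have : (1:ℝ) ≤ x / 2 := by linarith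
    exact_mod_cast this.trans (Int.le_ceil _)
  have hzn : z ≤ n := by
    apply Int.ceil_le.2; push_cast; linarith
  rcases eq_or_lt_of_le hz1 with h | h
  · refine ⟨1, le_refl _, by omega, by push_cast; linarith, ?_⟩
    have : x / 2 ≤ (z : ℝ) := Int.ceil_le.1 (le_of_eq hz.symm)
    rw [← h] at this; push_cast at this ⊢; linarith
  · refine ⟨(z - 1).toNat, by omega, by omega, ?_, ?_⟩
    · have h1 : ((z - 1 : ℤ) : ℝ) < x / 2 := by
        apply Int.lt_ceil.1; omega
      have h2' : ((z - 1).toNat : ℝ) = ((z - 1 : ℤ) : ℝ) := by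
        norm_cast; omega
      rw [h2']; linarith
    · have h1 : x / 2 ≤ (z : ℝ) := Int.le_ceil _
      have h2' : ((z - 1).toNat : ℝ) = ((z - 1 : ℤ) : ℝ) := by norm_cast; omega
      rw [h2']; push_cast; linarith

lemma JA_eq0 {x : ℝ} (hx : x ≤ 1) : JA n x = 0 := if_pos hx

lemma JA_mid {i : ℕ} (h1 : 1 ≤ i) (hin : i < n) {x : ℝ}
    (hx1 : 2 * (i:ℝ) < x) (hx2 : x ≤ 2 * i + 2) : JA n x = i := by
  have hi1 : (1:ℝ) ≤ i := by exact_mod_cast h1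
  have hgt : ¬ x ≤ 1 := by push_neg; linarith
  have hc : ⌈x / 2⌉ = (i : ℤ) + 1 := by
    rw [Int.ceil_eq_iff]; constructor
    · push_cast; linarith
    · push_cast; linarith
  simp only [JA, if_neg hgt, hc]
  have : ((i:ℤ) + 1 - 1).toNat = i := by omega
  rw [this]; omega

lemma JA_two (hn : 2 ≤ n) : JA n 2 = 1 := by
  have hc : ⌈(2:ℝ) / 2⌉ = (1 : ℤ) := by norm_num
  have hgt : ¬ (2:ℝ) ≤ 1 := by norm_num
  simp only [JA, if_neg hgt, hc]
  norm_num


/-! ### The Markov system of case A -/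

def sysA (n : ℕ) (hn : 2 ≤ n) (u : ℕ → Bool) : MarkovSystem n where
  cm := fun j => if j = 0 then 0 else if j = 1 then 1 else 2 * j
  cp := fun j => if j = 0 then 0 else 2 * j
  f := fun x => FA n u (JA n x) x
  F := FA n u
  F' := FA' n u
  two_le := hn
  cm_zero := by norm_num
  cm_n := by
    have h0 : n ≠ 0 := by omega
    have h1 : n ≠ 1 := by omega
    simp [h0, h1]
  cm_le_cp := by
    intro j _
    by_cases h0 : j = 0
    · simp [h0]
    by_cases h1 : j = 1
    · subst h1; norm_num
    · simp [h0, h1]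
  cp_lt_cm := by
    intro j _
    by_cases h0 : j = 0
    · subst h0; norm_num
    · have h1 : j + 1 ≠ 0 := by omega
      have h2 : j + 1 ≠ 1 := by omega
      have h3 : (1:ℝ) ≤ j := by exact_mod_cast Nat.one_le_iff_ne_zero.2 h0
      simp only [if_neg h0, if_neg h1, if_neg h2]
      push_cast; linarith

lemma IpartA (hn : 2 ≤ n) (u : ℕ → Bool) (i : ℕ) :
    (sysA n hn u).Ipart i = Set.Icc (aA i) (bA i) := by
  unfold MarkovSystem.Ipart sysA aA bA
  by_cases h0 : i = 0
  · subst h0; norm_num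
  · have h1 : i + 1 ≠ 0 := by omega
    have h2 : i + 1 ≠ 1 := by omega
    simp only [if_neg h0, if_neg h1, if_neg h2]
    congr 1
    push_cast; ring

lemma EpartA_one (hn : 2 ≤ n) (u : ℕ → Bool) :
    (sysA n hn u).Epart 1 = Set.Ioo (1:ℝ) 2 := by
  unfold MarkovSystem.Epart sysA; norm_num

lemma EpartA_ne (hn : 2 ≤ n) (u : ℕ → Bool) {j : ℕ} (hj : j ≠ 0) (hj1 : j ≠ 1) :
    (sysA n hn u).Epart j = ∅ := by
  unfold MarkovSystem.Epart sysA
  simp [hj, hj1]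

lemma itvA (hn : 2 ≤ n) (u : ℕ → Bool) :
    (sysA n hn u).itv = Set.Icc (0:ℝ) (2 * n) := by
  unfold MarkovSystem.itv sysA
  have h0 : n ≠ 0 := by omega
  have h1 : n ≠ 1 := by omega
  simp [h0, h1]

lemma Ipart_subset_domA (hn : 2 ≤ n) (u : ℕ → Bool) {i : ℕ} (hi : i < n) :
    (sysA n hn u).Ipart i ⊆ (sysA n hn u).dom := by
  intro x hx
  simp only [MarkovSystem.dom, Set.mem_iUnion, Finset.mem_range, exists_prop]
  exact ⟨i, hi, hx⟩

lemma mem_domA (hn : 2 ≤ n) (u : ℕ → Bool) {x : ℝ} (hx : x ∈ (sysA n hn u).dom) :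
    ∃ i, i < n ∧ x ∈ Set.Icc (aA i) (bA i) := by
  unfold MarkovSystem.dom at hx
  simp only [Set.mem_iUnion, Finset.mem_range, exists_prop] at hx
  obtain ⟨i, hi, hx⟩ := hx
  exact ⟨i, hi, by rwa [IpartA hn u i] at hx⟩

lemma fA_eq0 (hn : 2 ≤ n) (u : ℕ → Bool) {x : ℝ} (hx : x ≤ 1) :
    (sysA n hn u).f x = FA n u 0 x := by
  show FA n u (JA n x) x = _
  rw [JA_eq0 hx]

lemma fA_mid (hn : 2 ≤ n) (u : ℕ → Bool) {i : ℕ} (h1 : 1 ≤ i) (hin : i < n) {x : ℝ}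
    (hx1 : 2 * (i:ℝ) < x) (hx2 : x ≤ 2 * i + 2) :
    (sysA n hn u).f x = FA n u i x := by
  show FA n u (JA n x) x = _
  rw [JA_mid h1 hin hx1 hx2]

lemma fA_one (hn : 2 ≤ n) (u : ℕ → Bool) {x : ℝ} (hx1 : (2:ℝ) ≤ x) (hx2 : x ≤ 4) :
    (sysA n hn u).f x = FA n u 1 x := by
  rcases eq_or_lt_of_le hx1 with h | h
  · show FA n u (JA n x) x = _
    rw [← h, JA_two hn]
  · exact fA_mid hn u le_rfl hn (by push_cast; linarith) (by push_cast; linarith)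


lemma FA_true {i : ℕ} (hui : u i = true) (x : ℝ) :
    FA n u i x = 2 * n - mTA n i * (x - aA i) := by simp [FA, hui]

lemma FA_false {i : ℕ} (hui : u i = false) (x : ℝ) :
    FA n u i x = 2 + mFA n i * (x - aA i) := by simp [FA, hui]

lemma aA0 : aA 0 = 0 := by simp [aA]
lemma bA0 : bA 0 = 1 := by simp [bA]
lemma aA1 : aA 1 = 2 := by norm_num [aA]
lemma bA1 : bA 1 = 4 := by norm_num [bA]
lemma aA_eq {i : ℕ} (h : i ≠ 0) : aA i = 2 * i := if_neg h
lemma bA_eq {i : ℕ} (h : i ≠ 0) : bA i = 2 * i + 2 := if_neg h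
lemma mTA_eq {i : ℕ} (h : i ≠ 0) : mTA n i = n := if_neg h
lemma mFA_eq {i : ℕ} (h : i ≠ 0) : mFA n i = (n:ℝ) - 1 := if_neg h

lemma FA_surj (hn : 2 ≤ n) (u : ℕ → Bool) (i : ℕ) {y : ℝ} (h1 : 2 ≤ y) (h2 : y ≤ 2 * n) :
    ∃ x, x ∈ Set.Icc (aA i) (bA i) ∧ FA n u i x = y := by
  by_cases hui : u i = true
  · obtain ⟨x, hx, hxy⟩ := pre_dec_Icc (mTA_pos hn i) (a := aA i) (b := bA i)
      (by rw [spanTA]; linarith) h2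
    exact ⟨x, hx, by rw [FA_true hui]; exact hxy⟩
  · have hui' : u i = false := by simpa using hui
    obtain ⟨x, hx, hxy⟩ := pre_inc_Icc (mFA_pos hn i) (a := aA i) (b := bA i) h1
      (by rw [spanFA]; linarith)
    exact ⟨x, hx, by rw [FA_false hui']; exact hxy⟩

lemma domA_sub (hn : 2 ≤ n) (u : ℕ → Bool) :
    (sysA n hn u).dom ⊆ Set.Icc (0:ℝ) (2 * n) := by
  intro x hx
  obtain ⟨i, hi, hxi⟩ := mem_domA hn u hx
  exact ⟨le_trans (aA_nonneg i) hxi.1, le_trans hxi.2 (bA_le hi hn)⟩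

lemma compat1A (hn : 2 ≤ n) (u : ℕ → Bool) :
    ∀ j < n, ∀ x ∈ (sysA n hn u).Ipart j,
      (∀ k < n, k ≠ j → x ∉ (sysA n hn u).Ipart k) →
      (sysA n hn u).f x = (sysA n hn u).F j x := by
  intro j hj x hx hexcl
  rw [IpartA hn u j] at hx
  by_cases h0 : j = 0
  · subst h0
    exact fA_eq0 hn u (le_of_le_of_eq hx.2 bA0)
  · rcases eq_or_lt_of_le hx.1 with heq | hlt
    · by_cases h1 : j = 1
      · subst h1
        have hx2 : x = 2 := by rw [← heq, aA1]
        subst hx2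
        exact fA_one hn u le_rfl (by norm_num)
      · exfalso
        apply hexcl (j - 1) (by omega) (by omega)
        rw [IpartA hn u (j - 1)]
        have hc : ((j - 1 : ℕ) : ℝ) = (j : ℝ) - 1 := by
          push_cast [Nat.cast_sub (by omega : 1 ≤ j)]; ring
        have hjr : (1:ℝ) ≤ (j:ℝ) := by exact_mod_cast (by omega : 1 ≤ j)
        rw [aA_eq (by omega), bA_eq (by omega), hc]
        rw [aA_eq h0] at heq
        constructor <;> [skip; skip] <;> rw [← heq] <;> linarith
    · exact fA_mid hn u (by omega) hj (by rwa [aA_eq h0] at hlt)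
        (by rw [bA_eq h0] at hx; exact hx.2)

lemma compat2A (hn : 2 ≤ n) (u : ℕ → Bool) :
    ∀ x ∈ (sysA n hn u).dom, ∃ j, j < n ∧ x ∈ (sysA n hn u).Ipart j ∧
      (sysA n hn u).f x = (sysA n hn u).F j x := by
  intro x hx
  obtain ⟨i, hi, hxi⟩ := mem_domA hn u hx
  by_cases h0 : i = 0
  · subst h0
    exact ⟨0, by omega, by rw [IpartA]; exact hxi, fA_eq0 hn u (le_of_le_of_eq hxi.2 bA0)⟩
  · rcases eq_or_lt_of_le hxi.1 with heq | hlt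
    · by_cases h1 : i = 1
      · subst h1
        refine ⟨1, by omega, by rw [IpartA]; exact hxi, ?_⟩
        have hx2 : x = 2 := by rw [← heq, aA1]
        subst hx2
        exact fA_one hn u le_rfl (by norm_num)
      · refine ⟨i - 1, by omega, ?_, ?_⟩
        · rw [IpartA hn u (i - 1)]
          have hc : ((i - 1 : ℕ) : ℝ) = (i : ℝ) - 1 := by
            push_cast [Nat.cast_sub (by omega : 1 ≤ i)]; ring
          have hjr : (1:ℝ) ≤ (i:ℝ) := by exact_mod_cast (by omega : 1 ≤ i)
          rw [aA_eq (by omega), bA_eq (by omega), hc]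
          rw [aA_eq h0] at heq
          constructor <;> rw [← heq] <;> linarith
        · have hc : ((i - 1 : ℕ) : ℝ) = (i : ℝ) - 1 := by
            push_cast [Nat.cast_sub (by omega : 1 ≤ i)]; ring
          have hjr : (1:ℝ) ≤ (i:ℝ) := by exact_mod_cast (by omega : 1 ≤ i)
          apply fA_mid hn u (by omega) (by omega) <;> rw [hc] <;>
            rw [aA_eq h0] at heq <;> rw [← heq] <;> linarith
    · refine ⟨i, hi, by rw [IpartA]; exact hxi, ?_⟩
      exact fA_mid hn u (by omega) hi (by rwa [aA_eq h0] at hlt)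
        (by rw [bA_eq h0] at hxi; exact hxi.2)

lemma unionA_full (hn : 2 ≤ n) (u : ℕ → Bool) :
    Set.Icc (0:ℝ) (2 * n) =
      (⋃ j ∈ {j | j < n}, (sysA n hn u).Ipart j) ∪
      (⋃ j ∈ {j | 1 ≤ j ∧ j < n}, (sysA n hn u).Epart j) := by
  have h2 : (2:ℝ) ≤ n := by exact_mod_cast hn
  ext x
  simp only [Set.mem_union, Set.mem_iUnion, Set.mem_setOf_eq, exists_prop]
  constructor
  · rintro ⟨hx0, hx2n⟩
    by_cases hx1 : x ≤ 1
    · exact Or.inl ⟨0, by omega, by rw [IpartA, aA0, bA0]; exact ⟨hx0, hx1⟩⟩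
    · by_cases hx2 : x < 2
      · exact Or.inr ⟨1, ⟨le_rfl, by omega⟩, by rw [EpartA_one]; exact ⟨lt_of_not_ge hx1, hx2⟩⟩
      · obtain ⟨j, hj1, hjn, hxl, hxr⟩ := coverA hn (le_of_not_gt hx2) hx2n
        exact Or.inl ⟨j, hjn, by
          rw [IpartA, aA_eq (by omega), bA_eq (by omega)]; exact ⟨hxl, hxr⟩⟩
  · rintro (⟨j, hj, hx⟩ | ⟨j, ⟨hj1, hjn⟩, hx⟩)
    · rw [IpartA] at hx
      exact ⟨le_trans (aA_nonneg j) hx.1, le_trans hx.2 (bA_le hj hn)⟩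
    · by_cases h1 : j = 1
      · subst h1
        rw [EpartA_one] at hx
        exact ⟨by linarith [hx.1], by linarith [hx.2]⟩
      · rw [EpartA_ne hn u (by omega) h1] at hx
        exact absurd hx (Set.notMem_empty x)

lemma unionA_right (hn : 2 ≤ n) (u : ℕ → Bool) :
    Set.Icc (2:ℝ) (2 * n) = ⋃ j ∈ {j | 1 ≤ j ∧ j < n}, (sysA n hn u).Ipart j := by
  have h2 : (2:ℝ) ≤ n := by exact_mod_cast hn
  ext x
  simp only [Set.mem_iUnion, Set.mem_setOf_eq, exists_prop]
  constructor
  · rintro ⟨hx2, hx2n⟩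
    obtain ⟨j, hj1, hjn, hxl, hxr⟩ := coverA hn hx2 hx2n
    exact ⟨j, ⟨hj1, hjn⟩, by
      rw [IpartA, aA_eq (by omega), bA_eq (by omega)]; exact ⟨hxl, hxr⟩⟩
  · rintro ⟨j, ⟨hj1, hjn⟩, hx⟩
    rw [IpartA, aA_eq (by omega), bA_eq (by omega)] at hx
    have hjr : (1:ℝ) ≤ (j:ℝ) := by exact_mod_cast hj1
    have hjn' : (j:ℝ) + 1 ≤ n := by exact_mod_cast hjn
    exact ⟨by linarith [hx.1], by linarith [hx.2]⟩

lemma derivA (hn : 2 ≤ n) (u : ℕ → Bool) :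
    ∀ i < n, ∀ x ∈ (sysA n hn u).Ipart i,
      HasDerivWithinAt ((sysA n hn u).F i) ((sysA n hn u).F' i x) ((sysA n hn u).Ipart i) x := by
  intro i _ x _
  show HasDerivWithinAt (FA n u i) (FA' n u i x) _ x
  by_cases hui : u i = true
  · have he : FA n u i = fun y => 2 * n - mTA n i * (y - aA i) := by
      funext y; exact FA_true hui y
    have he' : FA' n u i x = -(mTA n i) := by simp [FA', hui]
    rw [he, he']
    exact (hasDerivAt_dec _ _ _ x).hasDerivWithinAt
  · have hui' : u i = false := by simpa using hui
    have he : FA n u i = fun y => 2 + mFA n i * (y - aA i) := by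
      funext y; exact FA_false hui' y
    have he' : FA' n u i x = mFA n i := by simp [FA', hui']
    rw [he, he']
    exact (hasDerivAt_inc _ _ _ x).hasDerivWithinAt

lemma monoA (hn : 2 ≤ n) (u : ℕ → Bool) :
    ∀ i < n, StrictMonoOn ((sysA n hn u).F i) ((sysA n hn u).Ipart i) ∨
      StrictAntiOn ((sysA n hn u).F i) ((sysA n hn u).Ipart i) := by
  intro i _
  by_cases hui : u i = true
  · right
    intro x _ y _ hxy
    show FA n u i y < FA n u i x
    rw [FA_true hui, FA_true hui]
    have := mTA_pos hn i
    nlinarith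
  · left
    have hui' : u i = false := by simpa using hui
    intro x _ y _ hxy
    show FA n u i x < FA n u i y
    rw [FA_false hui', FA_false hui']
    have := mFA_pos hn i
    nlinarith

lemma expansiveA (hn : 2 ≤ n) (u : ℕ → Bool)
    (i0 : ℕ) (h01 : 1 ≤ i0) (h0n : i0 < n) (hu0 : u i0 = true) :
    ∃ b > 1, ∀ i < n, ∀ x ∈ (sysA n hn u).Ipart i, b < |(sysA n hn u).F' i x| := by
  have h2 : (2:ℝ) ≤ n := by exact_mod_cast hn
  refine ⟨3/2, by norm_num, ?_⟩
  intro i hi x _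
  show (3/2 : ℝ) < |FA' n u i x|
  by_cases hui : u i = true
  · have he : FA' n u i x = -(mTA n i) := by simp [FA', hui]
    rw [he, abs_neg, abs_of_pos (mTA_pos hn i)]
    unfold mTA; split <;> linarith
  · have hui' : u i = false := by simpa using hui
    have he : FA' n u i x = mFA n i := by simp [FA', hui']
    rw [he, abs_of_pos (mFA_pos hn i)]
    by_cases h0 : i = 0
    · rw [h0]; unfold mFA; simp; linarith
    · rw [mFA_eq h0]
      by_cases h3 : 3 ≤ n
      · have : (3:ℝ) ≤ n := by exact_mod_cast h3
        linarith
      · exfalso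
        have hn2 : n = 2 := by omega
        have hi1 : i = 1 := by omega
        have : i0 = 1 := by omega
        rw [this] at hu0
        rw [hi1] at hui'
        rw [hu0] at hui'
        simp at hui'

lemma iterImage_one {n : ℕ} (M : MarkovSystem n) (X : Set ℝ) :
    M.iterImage 1 X = M.f '' (X ∩ M.dom) := rfl

lemma subset_iterImage_succ {n : ℕ} (M : MarkovSystem n) {A T : Set ℝ} {q : ℕ}
    (h1 : T ⊆ M.iterImage q A) (h2 : T ⊆ M.dom) :
    M.f '' T ⊆ M.iterImage (q + 1) A := by
  have he : M.iterImage (q + 1) A = M.f '' (M.iterImage q A ∩ M.dom) := rfl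
  rw [he]
  exact Set.image_mono (Set.subset_inter h1 h2)

/-- Claim 1 of case A:  every branch image (under `f`) contains `(2 i₀, 2 i₀ + 2]`. -/
lemma claim1A (hn : 2 ≤ n) (u : ℕ → Bool)
    (i0 : ℕ) (h01 : 1 ≤ i0) (h0n : i0 < n) (hu0 : u i0 = true)
    (hmin : ∀ j, 1 ≤ j → j < i0 → u j = false) :
    ∀ i < n, Set.Ioc (2 * (i0:ℝ)) (2 * i0 + 2) ⊆
      (sysA n hn u).f '' Set.Icc (aA i) (bA i) := by
  have h2 : (2:ℝ) ≤ n := by exact_mod_cast hn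
  have hi0r : (1:ℝ) ≤ (i0:ℝ) := by exact_mod_cast h01
  have hi0n : (i0:ℝ) + 1 ≤ n := by exact_mod_cast h0n
  intro i hi y hy
  have hy1 : 2 * (i0:ℝ) < y := hy.1
  have hy2 : y ≤ 2 * i0 + 2 := hy.2
  have hy2n : y ≤ 2 * n := by linarith
  have hyge2 : 2 ≤ y := by linarith
  by_cases h0 : i = 0
  · subst h0
    obtain ⟨x, hx, hxy⟩ := FA_surj hn u 0 hyge2 hy2n
    exact ⟨x, hx, by rw [fA_eq0 hn u (le_of_le_of_eq hx.2 bA0)]; exact hxy⟩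
  · by_cases h1 : i = 1
    · subst h1
      obtain ⟨x, hx, hxy⟩ := FA_surj hn u 1 hyge2 hy2n
      refine ⟨x, hx, ?_⟩
      rw [aA1, bA1] at hx
      rw [fA_one hn u hx.1 hx.2]; exact hxy
    · have h2i : 2 ≤ i := by omega
      have hir : (2:ℝ) ≤ (i:ℝ) := by exact_mod_cast h2i
      have hai : aA i = 2 * i := aA_eq h0
      have hbi : bA i = 2 * i + 2 := bA_eq h0
      have hmT : mTA n i = n := mTA_eq h0
      have hmF : mFA n i = (n:ℝ) - 1 := mFA_eq h0
      by_cases hui : u i = true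
      · by_cases hylt : y < 2 * n
        · obtain ⟨x, hx, hxy⟩ := pre_dec_Ioc (q := 2*(n:ℝ)) (a := 2*(i:ℝ))
            (b := 2*(i:ℝ)+2) (y := y) (mTA_pos hn i) (by rw [hmT]; linarith) hylt
          refine ⟨x, by rw [hai, hbi]; exact Set.Ioc_subset_Icc_self hx, ?_⟩
          rw [fA_mid hn u (by omega) hi hx.1 hx.2, FA_true hui, hai]
          exact hxy
        · have hyeq : y = 2 * n := le_antisymm hy2n (not_lt.1 hylt)
          have hi0top : i0 = n - 1 := by
            have hx1 : (n:ℝ) ≤ (i0:ℝ) + 1 := by linarith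
            have hx2 : n ≤ i0 + 1 := by exact_mod_cast hx1
            omega
          have hieq : i = i0 := by
            by_contra hne
            have hlt : i < i0 := by omega
            have := hmin i (by omega) hlt
            rw [this] at hui; simp at hui
          have hc : ((i - 1 : ℕ) : ℝ) = (i : ℝ) - 1 := by
            push_cast [Nat.cast_sub (by omega : 1 ≤ i)]; ring
          refine ⟨aA i, ⟨le_refl _, (aA_lt_bA i).le⟩, ?_⟩
          rw [fA_mid hn u (i := i - 1) (by omega) (by omega)
            (by rw [hc, hai]; linarith) (by rw [hc, hai]; linarith)]
          rw [FA_false (hmin (i - 1) (by omega) (by omega)),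
            mFA_eq (by omega : i - 1 ≠ 0), aA_eq (by omega : i - 1 ≠ 0), hc, hai, hyeq]
          ring
      · have hui' : u i = false := by simpa using hui
        obtain ⟨x, hx, hxy⟩ := pre_inc_Ioc (q := (2:ℝ)) (a := 2*(i:ℝ))
          (b := 2*(i:ℝ)+2) (y := y) (mFA_pos hn i) (by linarith) (by rw [hmF]; linarith)
        refine ⟨x, by rw [hai, hbi]; exact Set.Ioc_subset_Icc_self hx, ?_⟩
        rw [fA_mid hn u (by omega) hi hx.1 hx.2, FA_false hui', hai]
        exact hxy

/-- Claim 2 of case A: `f` maps `(2 i₀, 2 i₀ + 2]` onto a set containing `[0, 2n)`. -/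
lemma claim2A (hn : 2 ≤ n) (u : ℕ → Bool)
    (i0 : ℕ) (h01 : 1 ≤ i0) (h0n : i0 < n) (hu0 : u i0 = true) :
    Set.Ico (0:ℝ) (2 * n) ⊆
      (sysA n hn u).f '' Set.Ioc (2 * (i0:ℝ)) (2 * i0 + 2) := by
  have h2 : (2:ℝ) ≤ n := by exact_mod_cast hn
  have hi0r : (1:ℝ) ≤ (i0:ℝ) := by exact_mod_cast h01
  have hmT : mTA n i0 = n := mTA_eq (by omega)
  intro y hy
  obtain ⟨x, hx, hxy⟩ := pre_dec_Ioc (q := 2*(n:ℝ)) (a := 2*(i0:ℝ))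
    (b := 2*(i0:ℝ)+2) (y := y) (mTA_pos hn i0) (by rw [hmT]; have := hy.1; linarith) hy.2
  refine ⟨x, hx, ?_⟩
  have hfx : (sysA n hn u).f x = FA n u i0 x := by
    by_cases h1 : i0 = 1
    · subst h1
      push_cast at hx
      exact fA_one hn u (by linarith [hx.1]) (by linarith [hx.2])
    · exact fA_mid hn u h01 h0n hx.1 hx.2
  rw [hfx, FA_true hu0, aA_eq (by omega : i0 ≠ 0)]
  exact hxy

/-- Claim 2' of case A (open version). -/
lemma claim2A' (hn : 2 ≤ n) (u : ℕ → Bool)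
    (i0 : ℕ) (h01 : 1 ≤ i0) (h0n : i0 < n) (hu0 : u i0 = true) :
    Set.Ioo (0:ℝ) (2 * n) ⊆
      (sysA n hn u).f '' Set.Ioo (2 * (i0:ℝ)) (2 * i0 + 2) := by
  have h2 : (2:ℝ) ≤ n := by exact_mod_cast hn
  have hi0r : (1:ℝ) ≤ (i0:ℝ) := by exact_mod_cast h01
  have hmT : mTA n i0 = n := mTA_eq (by omega)
  intro y hy
  obtain ⟨x, hx, hxy⟩ := pre_dec_Ioo (q := 2*(n:ℝ)) (a := 2*(i0:ℝ))
    (b := 2*(i0:ℝ)+2) (y := y) (mTA_pos hn i0) (by rw [hmT]; have := hy.1; linarith) hy.2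
  refine ⟨x, hx, ?_⟩
  have hfx : (sysA n hn u).f x = FA n u i0 x := by
    by_cases h1 : i0 = 1
    · subst h1
      push_cast at hx
      exact fA_one hn u (by linarith [hx.1]) (by linarith [hx.2])
    · exact fA_mid hn u h01 h0n hx.1 hx.2.le
  rw [hfx, FA_true hu0, aA_eq (by omega : i0 ≠ 0)]
  exact hxy

/-- Claim 3 of case A: `2n` is in the `f`-image of `I₁ = [0,1]`. -/
lemma claim3A (hn : 2 ≤ n) (u : ℕ → Bool) :
    (2 * (n:ℝ)) ∈ (sysA n hn u).f '' Set.Icc (aA 0) (bA 0) := by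
  have h2 : (2:ℝ) ≤ n := by exact_mod_cast hn
  by_cases hu00 : u 0 = true
  · refine ⟨0, by rw [aA0, bA0]; exact ⟨le_refl _, by norm_num⟩, ?_⟩
    rw [fA_eq0 hn u (by norm_num), FA_true hu00, aA0]
    ring
  · have hu00' : u 0 = false := by simpa using hu00
    refine ⟨1, by rw [aA0, bA0]; exact ⟨by norm_num, le_refl _⟩, ?_⟩
    rw [fA_eq0 hn u le_rfl, FA_false hu00', aA0]
    norm_num [mFA]

lemma aperiodicA (hn : 2 ≤ n) (u : ℕ → Bool)
    (i0 : ℕ) (h01 : 1 ≤ i0) (h0n : i0 < n) (hu0 : u i0 = true)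
    (hmin : ∀ j, 1 ≤ j → j < i0 → u j = false) :
    ∀ i < n, ∃ q, (sysA n hn u).dom ⊆ (sysA n hn u).iterImage q ((sysA n hn u).Ipart i) := by
  have h2 : (2:ℝ) ≤ n := by exact_mod_cast hn
  have hi0r : (1:ℝ) ≤ (i0:ℝ) := by exact_mod_cast h01
  have hi0n : (i0:ℝ) + 1 ≤ n := by exact_mod_cast h0n
  set M := sysA n hn u with hM
  set T : Set ℝ := Set.Ioc (2 * (i0:ℝ)) (2 * i0 + 2) with hT
  have hTI : T ⊆ M.Ipart i0 := by
    rw [hM, IpartA hn u i0, aA_eq (by omega : i0 ≠ 0), bA_eq (by omega : i0 ≠ 0)]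
    exact Set.Ioc_subset_Icc_self
  have hTdom : T ⊆ M.dom := hTI.trans (Ipart_subset_domA hn u h0n)
  have hI0 : M.Ipart 0 = Set.Icc (aA 0) (bA 0) := IpartA hn u 0
  have hI0dom : Set.Icc (aA 0) (bA 0) ⊆ M.dom := by
    rw [← hI0]; exact Ipart_subset_domA hn u (by omega)
  intro i hi
  refine ⟨4, ?_⟩
  -- step 1 : `T ⊆ it1`
  have step1 : T ⊆ M.iterImage 1 (M.Ipart i) := by
    rw [iterImage_one, Set.inter_eq_left.2 (Ipart_subset_domA hn u hi)]
    rw [hM, IpartA hn u i]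
    exact claim1A hn u i0 h01 h0n hu0 hmin i hi
  -- step 2 : `[0, 2n) ⊆ it2`
  have step2 : Set.Ico (0:ℝ) (2 * n) ⊆ M.iterImage 2 (M.Ipart i) :=
    (claim2A hn u i0 h01 h0n hu0).trans (subset_iterImage_succ M step1 hTdom)
  by_cases hc : i0 + 1 < n
  · -- `i0 ≤ n - 2`
    have hi0n' : (i0:ℝ) + 2 ≤ n := by exact_mod_cast hc
    have hU2 : Set.Icc (aA 0) (bA 0) ∪ T ⊆ M.iterImage 2 (M.Ipart i) := by
      apply Set.union_subset
      · intro x hx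
        rw [aA0, bA0] at hx
        exact step2 ⟨hx.1, by linarith [hx.2]⟩
      · intro x hx
        exact step2 ⟨by linarith [hx.1], by linarith [hx.2]⟩
    have hUdom : Set.Icc (aA 0) (bA 0) ∪ T ⊆ M.dom := Set.union_subset hI0dom hTdom
    have step3 : Set.Icc (0:ℝ) (2 * n) ⊆ M.iterImage 3 (M.Ipart i) := by
      intro y hy
      rcases lt_or_eq_of_le hy.2 with hlt | heq
      · exact subset_iterImage_succ M hU2 hUdom
          (Set.image_mono Set.subset_union_right (claim2A hn u i0 h01 h0n hu0 ⟨hy.1, hlt⟩))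
      · exact subset_iterImage_succ M hU2 hUdom
          (Set.image_mono Set.subset_union_left (heq ▸ claim3A hn u))
    have hU3 : Set.Icc (aA 0) (bA 0) ∪ T ⊆ M.iterImage 3 (M.Ipart i) := by
      refine Set.Subset.trans ?_ step3
      apply Set.union_subset
      · intro x hx; rw [aA0, bA0] at hx; exact ⟨hx.1, by linarith [hx.2]⟩
      · intro x hx; exact ⟨by linarith [hx.1], by linarith [hx.2]⟩
    intro z hz
    have hz' : z ∈ Set.Icc (0:ℝ) (2 * n) := domA_sub hn u hz
    rcases lt_or_eq_of_le hz'.2 with hlt | heq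
    · exact subset_iterImage_succ M hU3 hUdom
        (Set.image_mono Set.subset_union_right (claim2A hn u i0 h01 h0n hu0 ⟨hz'.1, hlt⟩))
    · exact subset_iterImage_succ M hU3 hUdom
        (Set.image_mono Set.subset_union_left (heq ▸ claim3A hn u))
  · -- `i0 = n - 1`
    have hi0top : 2 * (i0:ℝ) + 2 = 2 * n := by
      have : i0 + 1 = n := by omega
      have := congrArg (fun m : ℕ => (m:ℝ)) this
      push_cast at this; linarith
    have hV2 : Set.Icc (aA 0) (bA 0) ∪ Set.Ioo (2 * (i0:ℝ)) (2 * i0 + 2) ⊆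
        M.iterImage 2 (M.Ipart i) := by
      apply Set.union_subset
      · intro x hx
        rw [aA0, bA0] at hx
        exact step2 ⟨hx.1, by linarith [hx.2]⟩
      · intro x hx
        exact step2 ⟨by linarith [hx.1], by linarith [hx.2]⟩
    have hVdom : Set.Icc (aA 0) (bA 0) ∪ Set.Ioo (2 * (i0:ℝ)) (2 * i0 + 2) ⊆ M.dom :=
      Set.union_subset hI0dom ((Set.Ioo_subset_Ioc_self.trans hTI).trans
        (Ipart_subset_domA hn u h0n))
    have step3 : Set.Ioc (0:ℝ) (2 * n) ⊆ M.iterImage 3 (M.Ipart i) := by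
      intro y hy
      rcases lt_or_eq_of_le hy.2 with hlt | heq
      · exact subset_iterImage_succ M hV2 hVdom
          (Set.image_mono Set.subset_union_right
            (claim2A' hn u i0 h01 h0n hu0 ⟨hy.1, hlt⟩))
      · exact subset_iterImage_succ M hV2 hVdom
          (Set.image_mono Set.subset_union_left (heq ▸ claim3A hn u))
    have hI03 : M.Ipart i0 ⊆ M.iterImage 3 (M.Ipart i) := by
      refine Set.Subset.trans ?_ step3
      rw [hM, IpartA hn u i0, aA_eq (by omega : i0 ≠ 0), bA_eq (by omega : i0 ≠ 0)]
      intro x hx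
      exact ⟨by linarith [hx.1], by linarith [hx.2]⟩
    intro z hz
    have hz' : z ∈ Set.Icc (0:ℝ) (2 * n) := domA_sub hn u hz
    -- `f '' (Ipart i0) ⊇ [0, 2n]`
    have himg : z ∈ M.f '' (M.Ipart i0) := by
      rcases lt_or_eq_of_le hz'.2 with hlt | heq
      · exact Set.image_mono hTI (claim2A hn u i0 h01 h0n hu0 ⟨hz'.1, hlt⟩)
      · have h2n : (2 * (n:ℝ)) ∈ T := ⟨by linarith, by linarith⟩
        have hmem := claim1A hn u i0 h01 h0n hu0 hmin i0 h0n h2n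
        rw [heq]
        show (2 * (n:ℝ)) ∈ (sysA n hn u).f '' ((sysA n hn u).Ipart i0)
        rw [IpartA hn u i0]
        exact hmem
    exact subset_iterImage_succ M hI03 (Ipart_subset_domA hn u h0n) himg

lemma isMarkovA (hn : 2 ≤ n) (u : ℕ → Bool)
    (i0 : ℕ) (h01 : 1 ≤ i0) (h0n : i0 < n) (hu0 : u i0 = true)
    (hmin : ∀ j, 1 ≤ j → j < i0 → u j = false) :
    IsMarkov (sysA n hn u) := by
  have hF : (sysA n hn u).F = FA n u := rfl
  refine ⟨compat1A hn u, compat2A hn u, ?_, ?_, ?_, derivA hn u,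
    fun i _ => continuousOn_const, monoA hn u, expansiveA hn u i0 h01 h0n hu0,
    aperiodicA hn u i0 h01 h0n hu0 hmin⟩
  · -- maps_into
    intro j hj
    rw [hF, IpartA, itvA]
    rintro _ ⟨x, hx, rfl⟩
    by_cases hui : u j = true
    · exact FA_true_mem hn hui hx
    · have h := FA_false_mem hn (by simpa using hui) hx
      exact ⟨by linarith [h.1], h.2⟩
  · -- onto
    intro y hy
    rw [itvA] at hy
    simp only [Set.mem_iUnion, Finset.mem_range, exists_prop]
    exact ⟨i0, h0n, by rw [hF, IpartA, imgA_true hn hu0]; exact hy⟩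
  · -- markov
    intro i hi
    by_cases hui : u i = true
    · refine ⟨{j | j < n}, {j | 1 ≤ j ∧ j < n}, fun j hj => hj, fun j hj => hj, ?_⟩
      rw [hF, IpartA, imgA_true hn hui, unionA_full hn u]
    · refine ⟨{j | 1 ≤ j ∧ j < n}, ∅, fun j hj => hj.2, by simp, ?_⟩
      rw [hF, IpartA, imgA_false hn (by simpa using hui), unionA_right hn u]
      simp

lemma ahatA (hn : 2 ≤ n) (u : ℕ → Bool) :
    ∀ i, i < n → ((sysA n hn u).ahat i 1 ↔ u i = true) := by
  have h2 : (2:ℝ) ≤ n := by exact_mod_cast hn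
  intro i hi
  have hF : (sysA n hn u).F = FA n u := rfl
  unfold MarkovSystem.ahat
  rw [IpartA, EpartA_one, hF, interior_Icc]
  constructor
  · rintro ⟨x, hx1, hx2⟩
    by_contra hui
    have hui' : u i = false := by simpa using hui
    have hm := FA_false_mem hn hui' (Set.Ioo_subset_Icc_self hx1)
    have : FA n u i x < 2 := (Set.mem_preimage.1 hx2).2
    linarith [hm.1]
  · intro hui
    obtain ⟨x, hx, hxy⟩ := pre_dec_Ioo (q := 2*(n:ℝ)) (a := aA i) (b := bA i)
      (y := (3/2 : ℝ)) (mTA_pos hn i) (by rw [spanTA]; norm_num) (by linarith)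
    refine ⟨x, hx, ?_⟩
    rw [Set.mem_preimage, FA_true hui, hxy]
    norm_num

/-! ### Case B: the only `true` index is `0`; escape interval `E_{n-1} = (2n-2, 2n-1)`.
`I_j = [2j-2, 2j]` for `j ≤ n-1` and `I_n = [2n-1, 2n]`. -/

def aB (n i : ℕ) : ℝ := if i = n - 1 then 2 * n - 1 else 2 * i
def bB (n i : ℕ) : ℝ := if i = n - 1 then 2 * n else 2 * i + 2

def FB (n i : ℕ) (x : ℝ) : ℝ :=
  if i = 0 then n * x
  else if i = n - 1 then (2 * n - 2) - (2 * n - 2) * (x - (2 * n - 1))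
  else (2 * n - 2) - ((n:ℝ) - 1) * (x - 2 * i)

def FB' (n i : ℕ) (_x : ℝ) : ℝ :=
  if i = 0 then n else if i = n - 1 then -(2 * n - 2) else -((n:ℝ) - 1)

def JB (n : ℕ) (x : ℝ) : ℕ :=
  if x ≤ 2 * n - 2 then min (n - 2) (⌈x / 2⌉ - 1).toNat else n - 1

def sysB (n : ℕ) (hn : 2 ≤ n) : MarkovSystem n where
  cm := fun j => if j = n then (2 * n : ℝ) else 2 * j
  cp := fun j => if j = n then (2 * n : ℝ) else if j = n - 1 then 2 * n - 1 else 2 * j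
  f := fun x => FB n (JB n x) x
  F := FB n
  F' := FB' n
  two_le := hn
  cm_zero := by
    have h1 : 0 ≠ n := by omega
    have h2 : 0 ≠ n - 1 := by omega
    simp [h1, h2]
  cm_n := by simp
  cm_le_cp := by
    intro j _
    have h2 : (2:ℝ) ≤ n := by exact_mod_cast hn
    by_cases hjn : j = n
    · simp [hjn]
    by_cases hj1 : j = n - 1
    · have hc : (j:ℝ) = (n:ℝ) - 1 := by
        subst hj1; push_cast [Nat.cast_sub (by omega : 1 ≤ n)]; ring
      simp only [if_neg hjn, if_pos hj1]
      rw [hc]; linarith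
    · simp [hjn, hj1]
  cp_lt_cm := by
    intro j hj
    have h2 : (2:ℝ) ≤ n := by exact_mod_cast hn
    by_cases hj1 : j = n - 1
    · have hjn : j ≠ n := by omega
      have hn1 : j + 1 = n := by omega
      simp only [if_neg hjn, if_pos hj1, hn1, if_pos rfl, eq_self_iff_true, if_true]
      linarith
    · have hjn : j ≠ n := by omega
      have hn1 : j + 1 ≠ n := by omega
      have hn2 : (j:ℝ) + 1 ≤ n := by exact_mod_cast hj
      simp only [if_neg hjn, if_neg hj1, if_neg hn1]
      push_cast; linarith

lemma IpartB (hn : 2 ≤ n) {i : ℕ} (hi : i < n) :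
    (sysB n hn).Ipart i = Set.Icc (aB n i) (bB n i) := by
  unfold MarkovSystem.Ipart sysB aB bB
  have hin : i ≠ n := by omega
  by_cases h1 : i = n - 1
  · have h4 : i + 1 = n := by omega
    simp only [if_neg hin, if_pos h1, h4, if_pos rfl, eq_self_iff_true, if_true]
  · have h2 : i + 1 ≠ n := by omega
    simp only [if_neg hin, if_neg h1, if_neg h2]
    congr 1
    push_cast; ring

lemma EpartB_top (hn : 2 ≤ n) :
    (sysB n hn).Epart (n - 1) = Set.Ioo (2 * (n:ℝ) - 2) (2 * n - 1) := by
  unfold MarkovSystem.Epart sysB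
  have h1 : n - 1 ≠ n := by omega
  have hc : ((n - 1 : ℕ) : ℝ) = (n:ℝ) - 1 := by
    push_cast [Nat.cast_sub (by omega : 1 ≤ n)]; ring
  simp only [if_neg h1, if_pos rfl, hc, eq_self_iff_true, if_true]
  congr 1 <;> ring

lemma EpartB_ne (hn : 2 ≤ n) {j : ℕ} (hj : j < n) (hj1 : j ≠ n - 1) :
    (sysB n hn).Epart j = ∅ := by
  unfold MarkovSystem.Epart sysB
  have h1 : j ≠ n := by omega
  simp [h1, hj1]

lemma itvB (hn : 2 ≤ n) : (sysB n hn).itv = Set.Icc (0:ℝ) (2 * n) := by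
  unfold MarkovSystem.itv sysB
  have h1 : 0 ≠ n := by omega
  simp [h1]

lemma aB_nonneg (hn : 2 ≤ n) (i : ℕ) : 0 ≤ aB n i := by
  have h2 : (2:ℝ) ≤ n := by exact_mod_cast hn
  unfold aB; split
  · linarith
  · positivity

lemma aB_lt_bB (i : ℕ) : aB n i < bB n i := by
  unfold aB bB; split <;> norm_num

lemma bB_le {i : ℕ} (hi : i < n) : bB n i ≤ 2 * n := by
  have h : (i:ℝ) + 1 ≤ n := by exact_mod_cast hi
  unfold bB; split
  · exact le_rfl
  · linarith

lemma FB_zero (x : ℝ) : FB n 0 x = n * x := by simp [FB]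

lemma FB_last (hn : 2 ≤ n) (x : ℝ) :
    FB n (n - 1) x = (2 * n - 2) - (2 * n - 2) * (x - (2 * n - 1)) := by
  have h0 : n - 1 ≠ 0 := by omega
  simp [FB, h0]

lemma FB_mid {i : ℕ} (h0 : i ≠ 0) (h1 : i ≠ n - 1) (x : ℝ) :
    FB n i x = (2 * n - 2) - ((n:ℝ) - 1) * (x - 2 * i) := by
  simp [FB, h0, h1]

lemma aB_zero (hn : 2 ≤ n) : aB n 0 = 0 := by
  have h : (0:ℕ) ≠ n - 1 := by omega
  simp [aB, h]

lemma bB_zero (hn : 2 ≤ n) : bB n 0 = 2 := by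
  have h : (0:ℕ) ≠ n - 1 := by omega
  simp [bB, h]

lemma aB_last : aB n (n - 1) = 2 * n - 1 := by simp [aB]
lemma bB_last : bB n (n - 1) = 2 * n := by simp [bB]

lemma aB_mid {i : ℕ} (h1 : i ≠ n - 1) : aB n i = 2 * i := by simp [aB, h1]
lemma bB_mid {i : ℕ} (h1 : i ≠ n - 1) : bB n i = 2 * i + 2 := by simp [bB, h1]

lemma FB_mem (hn : 2 ≤ n) {i : ℕ} (hi : i < n) {x : ℝ}
    (hx : x ∈ Set.Icc (aB n i) (bB n i)) : FB n i x ∈ Set.Icc (0:ℝ) (2 * n) := by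
  have h2 : (2:ℝ) ≤ n := by exact_mod_cast hn
  obtain ⟨hx1, hx2⟩ := hx
  by_cases h0 : i = 0
  · subst h0
    rw [aB_zero hn] at hx1
    rw [bB_zero hn] at hx2
    rw [FB_zero]
    constructor <;> nlinarith
  · by_cases h1 : i = n - 1
    · subst h1
      rw [aB_last] at hx1
      rw [bB_last] at hx2
      rw [FB_last hn]
      constructor <;> nlinarith
    · have hir : (1:ℝ) ≤ (i:ℝ) := by exact_mod_cast (by omega : 1 ≤ i)
      have hin : (i:ℝ) + 2 ≤ n := by exact_mod_cast (by omega : i + 2 ≤ n)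
      rw [aB_mid h1] at hx1
      rw [bB_mid h1] at hx2
      rw [FB_mid h0 h1]
      constructor <;> nlinarith

/-- The non-zero branches of case B have image `[0, 2n-2]`. -/
lemma FB_mem' (hn : 2 ≤ n) {i : ℕ} (h0 : i ≠ 0) (hi : i < n) {x : ℝ}
    (hx : x ∈ Set.Icc (aB n i) (bB n i)) : FB n i x ∈ Set.Icc (0:ℝ) (2 * n - 2) := by
  have h2 : (2:ℝ) ≤ n := by exact_mod_cast hn
  obtain ⟨hx1, hx2⟩ := hx
  by_cases h1 : i = n - 1
  · subst h1
    rw [aB_last] at hx1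
    rw [bB_last] at hx2
    rw [FB_last hn]
    constructor <;> nlinarith
  · have hir : (1:ℝ) ≤ (i:ℝ) := by exact_mod_cast (by omega : 1 ≤ i)
    have hin : (i:ℝ) + 2 ≤ n := by exact_mod_cast (by omega : i + 2 ≤ n)
    rw [aB_mid h1] at hx1
    rw [bB_mid h1] at hx2
    rw [FB_mid h0 h1]
    constructor <;> nlinarith

lemma coverB (hn : 2 ≤ n) {x : ℝ} (h0 : 0 ≤ x) (h2n : x ≤ 2 * n - 2) :
    ∃ j : ℕ, j ≤ n - 2 ∧ (2 * j : ℝ) ≤ x ∧ x ≤ 2 * j + 2 := by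
  have h2 : (2:ℝ) ≤ n := by exact_mod_cast hn
  set z : ℤ := ⌈x / 2⌉ with hz
  have hzn : z ≤ n - 1 := by
    apply Int.ceil_le.2; push_cast; linarith
  by_cases hz1 : z ≤ 1
  · refine ⟨0, by omega, by push_cast; linarith, ?_⟩
    have h1 : x / 2 ≤ (z:ℝ) := Int.le_ceil _
    have h1' : (z:ℝ) ≤ 1 := by exact_mod_cast hz1
    push_cast; linarith
  · push_neg at hz1
    refine ⟨(z - 1).toNat, by omega, ?_, ?_⟩
    · have h1 : ((z - 1 : ℤ) : ℝ) < x / 2 := by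
        apply Int.lt_ceil.1; omega
      have h2' : (((z - 1).toNat) : ℝ) = ((z - 1 : ℤ) : ℝ) := by norm_cast; omega
      rw [h2']; linarith
    · have h1 : x / 2 ≤ (z : ℝ) := Int.le_ceil _
      have h2' : (((z - 1).toNat) : ℝ) = ((z - 1 : ℤ) : ℝ) := by norm_cast; omega
      rw [h2']; push_cast; linarith

lemma JB_eq0 (hn : 2 ≤ n) {x : ℝ} (hx : x ≤ 2) : JB n x = 0 := by
  have h2 : (2:ℝ) ≤ n := by exact_mod_cast hn
  have hle : x ≤ 2 * n - 2 := by linarith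
  have hc : ⌈x / 2⌉ ≤ 1 := Int.ceil_le.2 (by push_cast; linarith)
  have : (⌈x / 2⌉ - 1).toNat = 0 := by omega
  simp [JB, if_pos hle, this]

lemma JB_mid (hn : 2 ≤ n) {i : ℕ} (h1 : 1 ≤ i) (h2 : i ≤ n - 2) {x : ℝ}
    (hx1 : 2 * (i:ℝ) < x) (hx2 : x ≤ 2 * i + 2) : JB n x = i := by
  have hnr : (2:ℝ) ≤ n := by exact_mod_cast hn
  have hir : (i:ℝ) + 2 ≤ n := by exact_mod_cast (by omega : i + 2 ≤ n)
  have hle : x ≤ 2 * n - 2 := by linarith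
  have hc : ⌈x / 2⌉ = (i : ℤ) + 1 := by
    rw [Int.ceil_eq_iff]; constructor
    · push_cast; linarith
    · push_cast; linarith
  have ht : ((i:ℤ) + 1 - 1).toNat = i := by omega
  simp only [JB, if_pos hle, hc, ht]
  omega

lemma JB_last (hn : 2 ≤ n) {x : ℝ} (hx : 2 * (n:ℝ) - 1 ≤ x) : JB n x = n - 1 := by
  have hnr : (2:ℝ) ≤ n := by exact_mod_cast hn
  have : ¬ x ≤ 2 * n - 2 := by push_neg; linarith
  simp [JB, this]

lemma fB_eq0 (hn : 2 ≤ n) {x : ℝ} (hx : x ≤ 2) :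
    (sysB n hn).f x = FB n 0 x := by
  show FB n (JB n x) x = _
  rw [JB_eq0 hn hx]

lemma fB_mid (hn : 2 ≤ n) {i : ℕ} (h1 : 1 ≤ i) (h2 : i ≤ n - 2) {x : ℝ}
    (hx1 : 2 * (i:ℝ) < x) (hx2 : x ≤ 2 * i + 2) :
    (sysB n hn).f x = FB n i x := by
  show FB n (JB n x) x = _
  rw [JB_mid hn h1 h2 hx1 hx2]

lemma fB_last (hn : 2 ≤ n) {x : ℝ} (hx : 2 * (n:ℝ) - 1 ≤ x) :
    (sysB n hn).f x = FB n (n - 1) x := by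
  show FB n (JB n x) x = _
  rw [JB_last hn hx]

lemma Ipart_subset_domB (hn : 2 ≤ n) {i : ℕ} (hi : i < n) :
    (sysB n hn).Ipart i ⊆ (sysB n hn).dom := by
  intro x hx
  simp only [MarkovSystem.dom, Set.mem_iUnion, Finset.mem_range, exists_prop]
  exact ⟨i, hi, hx⟩

lemma mem_domB (hn : 2 ≤ n) {x : ℝ} (hx : x ∈ (sysB n hn).dom) :
    ∃ i, i < n ∧ x ∈ Set.Icc (aB n i) (bB n i) := by
  simp only [MarkovSystem.dom, Set.mem_iUnion, Finset.mem_range, exists_prop] at hx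
  obtain ⟨i, hi, hx⟩ := hx
  exact ⟨i, hi, by rwa [IpartB hn hi] at hx⟩

lemma domB_sub (hn : 2 ≤ n) : (sysB n hn).dom ⊆ Set.Icc (0:ℝ) (2 * n) := by
  intro x hx
  obtain ⟨i, hi, hxi⟩ := mem_domB hn hx
  exact ⟨le_trans (aB_nonneg hn i) hxi.1, le_trans hxi.2 (bB_le hi)⟩

lemma compat1B (hn : 2 ≤ n) :
    ∀ j < n, ∀ x ∈ (sysB n hn).Ipart j,
      (∀ k < n, k ≠ j → x ∉ (sysB n hn).Ipart k) →
      (sysB n hn).f x = (sysB n hn).F j x := by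
  intro j hj x hx hexcl
  rw [IpartB hn hj] at hx
  by_cases h0 : j = 0
  · subst h0
    exact fB_eq0 hn (le_of_le_of_eq hx.2 (bB_zero hn))
  · by_cases h1 : j = n - 1
    · subst h1
      exact fB_last hn (le_of_eq_of_le (aB_last).symm hx.1)
    · rw [aB_mid h1, bB_mid h1] at hx
      rcases eq_or_lt_of_le hx.1 with heq | hlt
      · exfalso
        apply hexcl (j - 1) (by omega) (by omega)
        rw [IpartB hn (by omega : j - 1 < n), aB_mid (by omega : j - 1 ≠ n - 1),
          bB_mid (by omega : j - 1 ≠ n - 1)]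
        have hc : ((j - 1 : ℕ) : ℝ) = (j : ℝ) - 1 := by
          push_cast [Nat.cast_sub (by omega : 1 ≤ j)]; ring
        have hjr : (1:ℝ) ≤ (j:ℝ) := by exact_mod_cast (by omega : 1 ≤ j)
        rw [hc]
        constructor <;> rw [← heq] <;> linarith
      · exact fB_mid hn (by omega) (by omega) hlt hx.2

lemma compat2B (hn : 2 ≤ n) :
    ∀ x ∈ (sysB n hn).dom, ∃ j, j < n ∧ x ∈ (sysB n hn).Ipart j ∧
      (sysB n hn).f x = (sysB n hn).F j x := by
  intro x hx
  obtain ⟨i, hi, hxi⟩ := mem_domB hn hx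
  by_cases h0 : i = 0
  · subst h0
    exact ⟨0, by omega, by rw [IpartB hn hi]; exact hxi,
      fB_eq0 hn (le_of_le_of_eq hxi.2 (bB_zero hn))⟩
  · by_cases h1 : i = n - 1
    · subst h1
      exact ⟨n - 1, by omega, by rw [IpartB hn hi]; exact hxi,
        fB_last hn (le_of_eq_of_le (aB_last).symm hxi.1)⟩
    · rw [aB_mid h1, bB_mid h1] at hxi
      rcases eq_or_lt_of_le hxi.1 with heq | hlt
      · -- `x = 2 i`, use the previous branch
        have hc : ((i - 1 : ℕ) : ℝ) = (i : ℝ) - 1 := by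
          push_cast [Nat.cast_sub (by omega : 1 ≤ i)]; ring
        have hjr : (1:ℝ) ≤ (i:ℝ) := by exact_mod_cast (by omega : 1 ≤ i)
        refine ⟨i - 1, by omega, ?_, ?_⟩
        · rw [IpartB hn (by omega : i - 1 < n), aB_mid (by omega : i - 1 ≠ n - 1),
            bB_mid (by omega : i - 1 ≠ n - 1), hc]
          constructor <;> rw [← heq] <;> linarith
        · by_cases h00 : i - 1 = 0
          · have : (i:ℝ) = 1 := by exact_mod_cast (by omega : i = 1)
            rw [h00]
            exact fB_eq0 hn (by rw [← heq, this]; norm_num)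
          · apply fB_mid hn (by omega) (by omega) <;> rw [hc, ← heq] <;> linarith
      · exact ⟨i, hi, by rw [IpartB hn hi, aB_mid h1, bB_mid h1]; exact ⟨hxi.1, hxi.2⟩,
          fB_mid hn (by omega) (by omega) hlt hxi.2⟩

lemma imgB_zero (hn : 2 ≤ n) :
    FB n 0 '' Set.Icc (aB n 0) (bB n 0) = Set.Icc (0:ℝ) (2 * n) := by
  have h2 : (2:ℝ) ≤ n := by exact_mod_cast hn
  have hnpos : (0:ℝ) < n := by linarith
  apply Set.Subset.antisymm
  · rintro _ ⟨x, hx, rfl⟩; exact FB_mem hn (by omega) hx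
  · rintro y hy
    refine ⟨y / n, ?_, ?_⟩
    · rw [aB_zero hn, bB_zero hn]
      constructor
      · exact div_nonneg hy.1 hnpos.le
      · rw [div_le_iff₀ hnpos]; linarith [hy.2]
    · rw [FB_zero]; field_simp
lemma imgB_ne (hn : 2 ≤ n) {i : ℕ} (h0 : i ≠ 0) (hi : i < n) :
    FB n i '' Set.Icc (aB n i) (bB n i) = Set.Icc (0:ℝ) (2 * n - 2) := by
  have h2 : (2:ℝ) ≤ n := by exact_mod_cast hn
  apply Set.Subset.antisymm
  · rintro _ ⟨x, hx, rfl⟩; exact FB_mem' hn h0 hi hx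
  · rintro y hy
    by_cases h1 : i = n - 1
    · subst h1
      obtain ⟨x, hx, hxy⟩ := pre_dec_Icc (q := 2*(n:ℝ)-2) (m := 2*(n:ℝ)-2)
        (a := 2*(n:ℝ)-1) (b := 2*(n:ℝ)) (y := y) (by linarith)
        (by nlinarith [hy.1]) (by linarith [hy.2])
      refine ⟨x, by rw [aB_last, bB_last]; exact hx, ?_⟩
      rw [FB_last hn]; exact hxy
    · have hir : (1:ℝ) ≤ (i:ℝ) := by exact_mod_cast (by omega : 1 ≤ i)
      have hin : (i:ℝ) + 2 ≤ n := by exact_mod_cast (by omega : i + 2 ≤ n)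
      obtain ⟨x, hx, hxy⟩ := pre_dec_Icc (q := 2*(n:ℝ)-2) (m := (n:ℝ)-1)
        (a := 2*(i:ℝ)) (b := 2*(i:ℝ)+2) (y := y) (by linarith)
        (by nlinarith [hy.1]) (by linarith [hy.2])
      refine ⟨x, by rw [aB_mid h1, bB_mid h1]; exact hx, ?_⟩
      rw [FB_mid h0 h1]; exact hxy

lemma unionB_full (hn : 2 ≤ n) :
    Set.Icc (0:ℝ) (2 * n) =
      (⋃ j ∈ {j | j < n}, (sysB n hn).Ipart j) ∪
      (⋃ j ∈ {j | j = n - 1}, (sysB n hn).Epart j) := by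
  have h2 : (2:ℝ) ≤ n := by exact_mod_cast hn
  ext x
  simp only [Set.mem_union, Set.mem_iUnion, Set.mem_setOf_eq, exists_prop]
  constructor
  · rintro ⟨hx0, hx2n⟩
    by_cases hxa : x ≤ 2 * n - 2
    · obtain ⟨j, hj, hxl, hxr⟩ := coverB hn hx0 hxa
      exact Or.inl ⟨j, by omega, by
        rw [IpartB hn (by omega), aB_mid (by omega), bB_mid (by omega)]
        exact ⟨hxl, hxr⟩⟩
    · by_cases hxb : x < 2 * n - 1
      · exact Or.inr ⟨n - 1, rfl, by
          rw [EpartB_top hn]; exact ⟨lt_of_not_ge hxa, hxb⟩⟩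
      · exact Or.inl ⟨n - 1, by omega, by
          rw [IpartB hn (by omega), aB_last, bB_last]
          exact ⟨le_of_not_gt hxb, hx2n⟩⟩
  · rintro (⟨j, hj, hx⟩ | ⟨j, hj, hx⟩)
    · rw [IpartB hn hj] at hx
      exact ⟨le_trans (aB_nonneg hn j) hx.1, le_trans hx.2 (bB_le hj)⟩
    · subst hj
      rw [EpartB_top hn] at hx
      exact ⟨by linarith [hx.1], by linarith [hx.2]⟩

lemma unionB_left (hn : 2 ≤ n) :
    Set.Icc (0:ℝ) (2 * n - 2) = ⋃ j ∈ {j | j ≤ n - 2}, (sysB n hn).Ipart j := by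
  have h2 : (2:ℝ) ≤ n := by exact_mod_cast hn
  ext x
  simp only [Set.mem_iUnion, Set.mem_setOf_eq, exists_prop]
  constructor
  · rintro ⟨hx0, hx2n⟩
    obtain ⟨j, hj, hxl, hxr⟩ := coverB hn hx0 hx2n
    exact ⟨j, hj, by
      rw [IpartB hn (by omega), aB_mid (by omega), bB_mid (by omega)]
      exact ⟨hxl, hxr⟩⟩
  · rintro ⟨j, hj, hx⟩
    rw [IpartB hn (by omega), aB_mid (by omega), bB_mid (by omega)] at hx
    have hjn : (j:ℝ) + 2 ≤ n := by exact_mod_cast (by omega : j + 2 ≤ n)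
    exact ⟨le_trans (by positivity) hx.1, by linarith [hx.2]⟩

lemma claimB1 (hn : 2 ≤ n) :
    ∀ i < n, Set.Icc (0:ℝ) 2 ⊆ (sysB n hn).f '' Set.Icc (aB n i) (bB n i) := by
  have h2 : (2:ℝ) ≤ n := by exact_mod_cast hn
  have hnpos : (0:ℝ) < n := by linarith
  intro i hi y hy
  by_cases h0 : i = 0
  · subst h0
    refine ⟨y / n, ?_, ?_⟩
    · rw [aB_zero hn, bB_zero hn]
      refine ⟨div_nonneg hy.1 hnpos.le, ?_⟩
      rw [div_le_iff₀ hnpos]; linarith [hy.2]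
    · rw [fB_eq0 hn (by rw [div_le_iff₀ hnpos]; linarith [hy.2]), FB_zero]
      field_simp
  · by_cases h1 : i = n - 1
    · subst h1
      obtain ⟨x, hx, hxy⟩ := pre_dec_Icc (q := 2*(n:ℝ)-2) (m := 2*(n:ℝ)-2)
        (a := 2*(n:ℝ)-1) (b := 2*(n:ℝ)) (y := y) (by linarith)
        (by nlinarith [hy.1]) (by linarith [hy.2])
      refine ⟨x, by rw [aB_last, bB_last]; exact hx, ?_⟩
      rw [fB_last hn hx.1, FB_last hn]; exact hxy
    · have hir : (1:ℝ) ≤ (i:ℝ) := by exact_mod_cast (by omega : 1 ≤ i)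
      have hin : (i:ℝ) + 2 ≤ n := by exact_mod_cast (by omega : i + 2 ≤ n)
      have h3 : (3:ℝ) ≤ n := by linarith
      obtain ⟨x, hx, hxy⟩ := pre_dec_Ioc (q := 2*(n:ℝ)-2) (m := (n:ℝ)-1)
        (a := 2*(i:ℝ)) (b := 2*(i:ℝ)+2) (y := y) (by linarith)
        (by nlinarith [hy.1]) (by linarith [hy.2])
      refine ⟨x, by rw [aB_mid h1, bB_mid h1]; exact Set.Ioc_subset_Icc_self hx, ?_⟩
      rw [fB_mid hn (by omega) (by omega) hx.1 hx.2, FB_mid h0 h1]; exact hxy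

lemma claimB2 (hn : 2 ≤ n) :
    Set.Icc (0:ℝ) (2 * n) ⊆ (sysB n hn).f '' Set.Icc (aB n 0) (bB n 0) := by
  have h2 : (2:ℝ) ≤ n := by exact_mod_cast hn
  have hnpos : (0:ℝ) < n := by linarith
  intro y hy
  refine ⟨y / n, ?_, ?_⟩
  · rw [aB_zero hn, bB_zero hn]
    refine ⟨div_nonneg hy.1 hnpos.le, ?_⟩
    rw [div_le_iff₀ hnpos]; linarith [hy.2]
  · rw [fB_eq0 hn (by rw [div_le_iff₀ hnpos]; linarith [hy.2]), FB_zero]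
    field_simp

lemma isMarkovB (hn : 2 ≤ n) : IsMarkov (sysB n hn) := by
  have h2 : (2:ℝ) ≤ n := by exact_mod_cast hn
  have hF : (sysB n hn).F = FB n := rfl
  refine ⟨compat1B hn, compat2B hn, ?_, ?_, ?_, ?_,
    fun i _ => continuousOn_const, ?_, ?_, ?_⟩
  · -- maps_into
    intro j hj
    rw [hF, IpartB hn hj, itvB hn]
    rintro _ ⟨x, hx, rfl⟩
    exact FB_mem hn hj hx
  · -- onto
    intro y hy
    rw [itvB hn] at hy
    simp only [Set.mem_iUnion, Finset.mem_range, exists_prop]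
    exact ⟨0, by omega, by rw [hF, IpartB hn (by omega), imgB_zero hn]; exact hy⟩
  · -- markov
    intro i hi
    by_cases h0 : i = 0
    · subst h0
      refine ⟨{j | j < n}, {j | j = n - 1}, fun j hj => hj,
        fun j hj => by simp only [Set.mem_setOf_eq] at hj ⊢; omega, ?_⟩
      rw [hF, IpartB hn hi, imgB_zero hn, unionB_full hn]
    · refine ⟨{j | j ≤ n - 2}, ∅, fun j hj => by
        simp only [Set.mem_setOf_eq] at hj ⊢; omega, by simp, ?_⟩
      rw [hF, IpartB hn hi, imgB_ne hn h0 hi, unionB_left hn]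
      simp
  · -- deriv
    intro i hi x _
    show HasDerivWithinAt (FB n i) (FB' n i x) _ x
    by_cases h0 : i = 0
    · subst h0
      have he : FB n 0 = fun y => (n:ℝ) * y := funext (FB_zero)
      have he' : FB' n 0 x = (n:ℝ) := by simp [FB']
      rw [he, he']
      exact ((hasDerivAt_id x).const_mul (n:ℝ)).hasDerivWithinAt.congr_deriv (by ring)
    · by_cases h1 : i = n - 1
      · subst h1
        have he : FB n (n - 1) = fun y => (2*(n:ℝ) - 2) - (2*n-2) * (y - (2*n-1)) :=
          funext (FB_last hn)
        have he' : FB' n (n - 1) x = -(2*(n:ℝ)-2) := by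
          unfold FB'; rw [if_neg h0, if_pos rfl]
        rw [he, he']
        exact (hasDerivAt_dec _ _ _ x).hasDerivWithinAt
      · have he : FB n i = fun y => (2*(n:ℝ) - 2) - ((n:ℝ)-1) * (y - 2*i) :=
          funext (FB_mid h0 h1)
        have he' : FB' n i x = -((n:ℝ)-1) := by simp [FB', h0, h1]
        rw [he, he']
        exact (hasDerivAt_dec _ _ _ x).hasDerivWithinAt
  · -- mono
    intro i hi
    by_cases h0 : i = 0
    · subst h0
      left
      intro x _ y _ hxy
      show FB n 0 x < FB n 0 y
      rw [FB_zero, FB_zero]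
      nlinarith
    · right
      intro x _ y _ hxy
      show FB n i y < FB n i x
      by_cases h1 : i = n - 1
      · subst h1
        rw [FB_last hn, FB_last hn]
        nlinarith
      · have hir : (1:ℝ) ≤ (i:ℝ) := by exact_mod_cast (by omega : 1 ≤ i)
        have hin : (i:ℝ) + 2 ≤ n := by exact_mod_cast (by omega : i + 2 ≤ n)
        rw [FB_mid h0 h1, FB_mid h0 h1]
        nlinarith
  · -- expansive
    refine ⟨3/2, by norm_num, ?_⟩
    intro i hi x _
    show (3/2:ℝ) < |FB' n i x|
    by_cases h0 : i = 0
    · subst h0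
      have he : FB' n 0 x = (n:ℝ) := by simp [FB']
      rw [he, abs_of_pos (by linarith)]
      linarith
    · by_cases h1 : i = n - 1
      · subst h1
        have he : FB' n (n - 1) x = -(2*(n:ℝ)-2) := by
          unfold FB'; rw [if_neg h0, if_pos rfl]
        rw [he, abs_neg, abs_of_pos (by linarith)]
        linarith
      · have hin : (i:ℝ) + 2 ≤ n := by exact_mod_cast (by omega : i + 2 ≤ n)
        have hir : (1:ℝ) ≤ (i:ℝ) := by exact_mod_cast (by omega : 1 ≤ i)
        have he : FB' n i x = -((n:ℝ)-1) := by simp [FB', h0, h1]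
        rw [he, abs_neg, abs_of_pos (by linarith)]
        linarith
  · -- aperiodic
    intro i hi
    refine ⟨2, ?_⟩
    have hI0 : (sysB n hn).Ipart 0 = Set.Icc (0:ℝ) 2 := by
      rw [IpartB hn (by omega), aB_zero hn, bB_zero hn]
    have step1 : Set.Icc (0:ℝ) 2 ⊆ (sysB n hn).iterImage 1 ((sysB n hn).Ipart i) := by
      rw [iterImage_one, Set.inter_eq_left.2 (Ipart_subset_domB hn hi), IpartB hn hi]
      exact claimB1 hn i hi
    have h02dom : Set.Icc (0:ℝ) 2 ⊆ (sysB n hn).dom := by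
      rw [← hI0]; exact Ipart_subset_domB hn (by omega)
    intro z hz
    have hz' : z ∈ Set.Icc (0:ℝ) (2 * n) := domB_sub hn hz
    apply subset_iterImage_succ (sysB n hn) step1 h02dom
    have := claimB2 hn hz'
    rwa [aB_zero hn, bB_zero hn] at this

lemma ahatB (hn : 2 ≤ n) (u : ℕ → Bool) (hu0 : u 0 = true)
    (hB : ∀ j, 1 ≤ j → j < n → u j = false) :
    ∀ i, i < n → ((sysB n hn).ahat i (n - 1) ↔ u i = true) := by
  have h2 : (2:ℝ) ≤ n := by exact_mod_cast hn
  have hnpos : (0:ℝ) < n := by linarith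
  intro i hi
  have hF : (sysB n hn).F = FB n := rfl
  unfold MarkovSystem.ahat
  rw [IpartB hn hi, EpartB_top hn, hF, interior_Icc]
  by_cases h0 : i = 0
  · subst h0
    rw [aB_zero hn, bB_zero hn]
    constructor
    · intro _; exact hu0
    · intro _
      refine ⟨(2 * n - 3/2) / n, ⟨?_, ?_⟩, ?_⟩
      · exact div_pos (by linarith) hnpos
      · rw [div_lt_iff₀ hnpos]; linarith
      · rw [Set.mem_preimage, FB_zero]
        have : (n:ℝ) * ((2 * n - 3/2) / n) = 2 * n - 3/2 := by field_simp
        rw [this]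
        constructor <;> linarith
  · rw [hB i (by omega) hi]
    simp only [Bool.false_eq_true, iff_false]
    rintro ⟨x, hx1, hx2⟩
    have hm := FB_mem' hn h0 hi (Set.Ioo_subset_Icc_self hx1)
    have : 2 * (n:ℝ) - 2 < FB n i x := (Set.mem_preimage.1 hx2).1
    linarith [hm.2]
end EscapeCol
/-- For every `n ≥ 2` and every nonzero `0-1` vector `u`, there is a Markov
interval map with exactly one nonempty escape interval `E_k`, whose escape
transition column equals `u`: `int I_i ∩ f⁻¹(E_k) ≠ ∅` iff `u i = 1`. -/
theorem exists_markov_with_prescribed_escape_column (n : ℕ) (hn : 2 ≤ n)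
    (u : ℕ → Bool) (hu : ∃ i, i < n ∧ u i = true) :
    ∃ M : MarkovSystem n, IsMarkov M ∧
      ∃ k, 1 ≤ k ∧ k < n ∧ (M.Epart k).Nonempty ∧
        (∀ j, 1 ≤ j → j < n → j ≠ k → M.Epart j = ∅) ∧
        (∀ i < n, (M.ahat i k ↔ u i = true)) := by
  classical
  by_cases hA : ∃ i, 1 ≤ i ∧ i < n ∧ u i = true
  · set i0 := Nat.find hA with hi0
    obtain ⟨h01, h0n, hu0⟩ := Nat.find_spec hA
    have hmin : ∀ j, 1 ≤ j → j < i0 → u j = false := by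
      intro j hj1 hj2
      by_contra hb
      have hb' : u j = true := by
        cases hj : u j
        · exact absurd hj hb
        · rfl
      exact Nat.find_min hA hj2 ⟨hj1, by omega, hb'⟩
    refine ⟨EscapeCol.sysA n hn u,
      EscapeCol.isMarkovA hn u i0 h01 h0n hu0 hmin, 1, le_rfl, by omega, ?_, ?_, ?_⟩
    · rw [EscapeCol.EpartA_one hn u]
      exact ⟨3/2, by norm_num⟩
    · intro j hj1 hjn hj2
      exact EscapeCol.EpartA_ne hn u (by omega) hj2
    · exact EscapeCol.ahatA hn u
  · push_neg at hA
    have hu0 : u 0 = true := by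
      obtain ⟨i, hi, hui⟩ := hu
      rcases Nat.eq_zero_or_pos i with rfl | hpos
      · exact hui
      · exact absurd hui (hA i hpos hi)
    have hB : ∀ j, 1 ≤ j → j < n → u j = false := by
      intro j h1 h2
      have hne := hA j h1 h2
      cases hj : u j
      · rfl
      · exact absurd hj hne
    have h2 : (2:ℝ) ≤ n := by exact_mod_cast hn
    refine ⟨EscapeCol.sysB n hn, EscapeCol.isMarkovB hn, n - 1, by omega, by omega,
      ?_, ?_, ?_⟩
    · rw [EscapeCol.EpartB_top hn]
      exact ⟨2 * n - 3/2, by constructor <;> linarith⟩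
    · intro j hj1 hjn hj2
      exact EscapeCol.EpartB_ne hn hjn hj2
    · exact EscapeCol.ahatB hn u hu0 hB
end
end

section
/- Let f be a Markov interval map. Then its transition matrix A_f is primitive: there exists m ≥ 1 such that every entry of the matrix power A_f^m is strictly positive. -/
open scoped Classical ENNReal

noncomputable section

namespace MarkovSystem

variable {n : ℕ} (M : MarkovSystem n)

lemma cp_lt_cm_of_lt : ∀ {a b : ℕ}, a < b → b ≤ n → M.cp a < M.cm b := by
  intro a b
  induction b with
  | zero => omega
  | succ b ih =>
    intro h hb
    rcases Nat.lt_succ_iff_lt_or_eq.1 h with h' | h'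
    · exact lt_trans (lt_of_lt_of_le (ih h' (by omega)) (M.cm_le_cp b (by omega)))
        (M.cp_lt_cm b (by omega))
    · subst h'; exact M.cp_lt_cm a (by omega)

lemma cm_mono' {a b : ℕ} (h : a ≤ b) (hb : b ≤ n) : M.cm a ≤ M.cm b := by
  rcases h.eq_or_lt with rfl | h'
  · exact le_refl _
  · exact le_trans (M.cm_le_cp a (by omega)) (M.cp_lt_cm_of_lt h' hb).le

lemma cp_mono' {a b : ℕ} (h : a ≤ b) (hb : b ≤ n) : M.cp a ≤ M.cp b := by
  rcases h.eq_or_lt with rfl | h'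
  · exact le_refl _
  · exact le_trans (M.cp_lt_cm_of_lt h' hb).le (M.cm_le_cp b hb)

lemma cm_le_cp_of_le {a b : ℕ} (h : a ≤ b) (hb : b ≤ n) : M.cm a ≤ M.cp b :=
  le_trans (M.cm_mono' h hb) (M.cm_le_cp b hb)

/-- The finite set of all partition boundary points. -/
def Gset : Set ℝ := (M.cm '' Set.Iic n) ∪ (M.cp '' Set.Iic n)

lemma Gset_finite : M.Gset.Finite :=
  ((Set.finite_Iic n).image M.cm).union ((Set.finite_Iic n).image M.cp)

lemma epart_disj_ipart {k j : ℕ} (hk1 : 1 ≤ k) (hk : k < n) (hj : j < n)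
    {x : ℝ} (hx : x ∈ M.Epart k) (hx' : x ∈ M.Ipart j) : False := by
  obtain ⟨h1, h2⟩ := hx
  obtain ⟨h3, h4⟩ := hx'
  rcases le_or_gt k j with h | h
  · have := M.cp_mono' h (by omega)
    linarith
  · have := M.cm_mono' (by omega : j + 1 ≤ k) (by omega)
    linarith

lemma epart_disj_dom {k : ℕ} (hk1 : 1 ≤ k) (hk : k < n) {x : ℝ}
    (hx : x ∈ M.Epart k) (hx' : x ∈ M.dom) : False := by
  obtain ⟨j, hj, hxj⟩ := Set.mem_iUnion₂.1 hx'
  exact M.epart_disj_ipart hk1 hk (Finset.mem_range.1 hj) hx hxj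

lemma mem_gset_of_mem_two_aux {j j' : ℕ} (hlt : j < j') (hj' : j' ≤ n)
    {x : ℝ} (hx : x ∈ M.Ipart j) (hx' : x ∈ M.Ipart j') : x ∈ M.Gset := by
  obtain ⟨h1, h2⟩ := hx
  obtain ⟨h3, h4⟩ := hx'
  have : M.cm (j + 1) ≤ M.cp j' := M.cm_le_cp_of_le (by omega) hj'
  have hxe : x = M.cp j' := le_antisymm (by linarith) h3
  exact Or.inr ⟨j', Set.mem_Iic.2 hj', hxe.symm⟩

lemma mem_gset_of_mem_two {j j' : ℕ} (hj : j < n) (hj' : j' < n) (hne : j' ≠ j)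
    {x : ℝ} (hx : x ∈ M.Ipart j) (hx' : x ∈ M.Ipart j') : x ∈ M.Gset := by
  rcases lt_or_gt_of_ne hne with h | h
  · exact M.mem_gset_of_mem_two_aux h (by omega) hx' hx
  · exact M.mem_gset_of_mem_two_aux h (by omega) hx hx'

lemma interior_ipart_eq {j : ℕ} (hj : j < n) :
    interior (M.Ipart j) = Set.Ioo (M.cp j) (M.cm (j + 1)) := by
  rw [Ipart, interior_Icc]

lemma interior_ipart_disj {j j' : ℕ} (hj : j < n) (hj' : j' < n)
    {x : ℝ} (hx : x ∈ interior (M.Ipart j)) (hx' : x ∈ M.Ipart j') : j' = j := by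
  rw [M.interior_ipart_eq hj] at hx
  obtain ⟨h1, h2⟩ := hx
  obtain ⟨h3, h4⟩ := hx'
  by_contra hne
  rcases lt_or_gt_of_ne hne with h | h
  · have : M.cm (j' + 1) ≤ M.cp j := M.cm_le_cp_of_le (by omega) (by omega)
    linarith
  · have : M.cm (j + 1) ≤ M.cp j' := M.cm_le_cp_of_le (by omega) (by omega)
    linarith

lemma interior_ipart_disj_epart {j k : ℕ} (hj : j < n) (hk1 : 1 ≤ k) (hk : k < n)
    {x : ℝ} (hx : x ∈ interior (M.Ipart j)) (hx' : x ∈ M.Epart k) : False := by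
  rw [M.interior_ipart_eq hj] at hx
  obtain ⟨h1, h2⟩ := hx
  obtain ⟨h3, h4⟩ := hx'
  rcases le_or_gt k j with h | h
  · have := M.cp_mono' h (by omega); linarith
  · have := M.cm_mono' (by omega : j + 1 ≤ k) (by omega); linarith

/-- One-step transition edge. -/
def Edge (k j : ℕ) : Prop := j < n ∧ M.trans k j

/-- Paths of a given length in the transition graph. -/
def Reach (M : MarkovSystem n) : ℕ → ℕ → ℕ → Prop
  | 0, i, j => j = i
  | q + 1, i, j => ∃ k, Reach M q i k ∧ M.Edge k j

lemma reach_lt {q i j : ℕ} (hi : i < n) (h : M.Reach q i j) : j < n := by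
  cases q with
  | zero => cases h; exact hi
  | succ q => obtain ⟨k, _, hkj⟩ := h; exact hkj.1

lemma reach_trans {p q i k j : ℕ} (h1 : M.Reach p i k) (h2 : M.Reach q k j) :
    M.Reach (p + q) i j := by
  induction q generalizing j with
  | zero => cases h2; exact h1
  | succ q ih =>
    obtain ⟨k', hk', he⟩ := h2
    exact ⟨k', ih hk', he⟩

lemma trans_of_subset (hM : IsMarkov M) {j k : ℕ} (hj : j < n) (hk : k < n)
    (h : M.Ipart k ⊆ M.F j '' M.Ipart j) : M.trans j k := by
  intro y hy
  rw [M.interior_ipart_eq hk] at hy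
  obtain ⟨hy1, hy2⟩ := hy
  have hck : M.cp k < M.cm (k + 1) := M.cp_lt_cm k hk
  have hcj : M.cp j < M.cm (j + 1) := M.cp_lt_cm j hj
  have hyI : y ∈ M.Ipart k := ⟨hy1.le, hy2.le⟩
  obtain ⟨x, hxI, hxy⟩ := h hyI
  obtain ⟨x₁, hx₁I, hx₁⟩ := h (⟨le_refl _, hck.le⟩ : M.cp k ∈ M.Ipart k)
  obtain ⟨x₂, hx₂I, hx₂⟩ := h (⟨hck.le, le_refl _⟩ : M.cm (k + 1) ∈ M.Ipart k)
  have hcpj : M.cp j ∈ M.Ipart j := ⟨le_refl _, hcj.le⟩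
  have hcmj : M.cm (j + 1) ∈ M.Ipart j := ⟨hcj.le, le_refl _⟩
  have hxa : x ≠ M.cp j := by
    intro he; rw [he] at hxy
    rcases hM.mono j hj with hm | hm
    · have h5 : M.F j (M.cp j) ≤ M.F j x₁ := hm.monotoneOn hcpj hx₁I hx₁I.1
      rw [hxy, hx₁] at h5; linarith
    · have h5 : M.F j x₂ ≤ M.F j (M.cp j) := hm.antitoneOn hcpj hx₂I hx₂I.1
      rw [hxy, hx₂] at h5; linarith
  have hxb : x ≠ M.cm (j + 1) := by
    intro he; rw [he] at hxy
    rcases hM.mono j hj with hm | hm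
    · have h5 : M.F j x₂ ≤ M.F j (M.cm (j + 1)) := hm.monotoneOn hx₂I hcmj hx₂I.2
      rw [hxy, hx₂] at h5; linarith
    · have h5 : M.F j (M.cm (j + 1)) ≤ M.F j x₁ := hm.antitoneOn hx₁I hcmj hx₁I.2
      rw [hxy, hx₁] at h5; linarith
  refine ⟨x, ?_, hxy⟩
  rw [M.interior_ipart_eq hj]
  exact ⟨lt_of_le_of_ne hxI.1 (Ne.symm hxa), lt_of_le_of_ne hxI.2 hxb⟩

lemma iter_subset (hM : IsMarkov M) {i : ℕ} (hi : i < n) (q : ℕ) :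
    ∃ Fq : Set ℝ, Fq.Finite ∧
      M.iterImage q (M.Ipart i) ⊆
        {x | ∃ j, M.Reach q i j ∧ x ∈ M.Ipart j} ∪
        ({x | ∃ k, 1 ≤ k ∧ k < n ∧ x ∈ M.Epart k} ∪ Fq) := by
  induction q with
  | zero =>
    refine ⟨∅, Set.finite_empty, ?_⟩
    intro x hx
    exact Or.inl ⟨i, rfl, hx⟩
  | succ q ih =>
    obtain ⟨Fq, hFq, hsub⟩ := ih
    refine ⟨M.f '' (Fq ∪ M.Gset), (hFq.union M.Gset_finite).image _, ?_⟩
    rintro y ⟨x, ⟨hxiter, hxdom⟩, rfl⟩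
    rcases hsub hxiter with ⟨j, hreach, hxj⟩ | (⟨k, hk1, hk2, hxk⟩ | hxF)
    · -- x is in a reachable Markov interval
      have hjn : j < n := M.reach_lt hi hreach
      by_cases hG : x ∈ M.Gset
      · exact Or.inr (Or.inr ⟨x, Or.inr hG, rfl⟩)
      · obtain ⟨j', hj'n, hxj', hfx⟩ := hM.compat₂ x hxdom
        have hjj : j' = j := by
          by_contra hne
          exact hG (M.mem_gset_of_mem_two hjn hj'n hne hxj hxj')
        have hfxj : M.f x = M.F j x := by rw [← hjj]; exact hfx
        have himg : M.f x ∈ M.F j '' M.Ipart j := ⟨x, hxj, hfxj.symm⟩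
        obtain ⟨S, T, hS, hT, heq⟩ := hM.markov j hjn
        rw [heq] at himg
        rcases himg with hIm | hEm
        · obtain ⟨k, hkS, hxk⟩ := Set.mem_iUnion₂.1 hIm
          have hkn : k < n := hS hkS
          have hksub : M.Ipart k ⊆ M.F j '' M.Ipart j := by
            rw [heq]
            exact fun z hz => Or.inl (Set.mem_iUnion₂.2 ⟨k, hkS, hz⟩)
          exact Or.inl ⟨k, ⟨j, hreach, hkn, M.trans_of_subset hM hjn hkn hksub⟩, hxk⟩
        · obtain ⟨k, hkT, hxk⟩ := Set.mem_iUnion₂.1 hEm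
          exact Or.inr (Or.inl ⟨k, (hT hkT).1, (hT hkT).2, hxk⟩)
    · exact absurd hxdom (fun hd => M.epart_disj_dom hk1 hk2 hxk hd)
    · exact Or.inr (Or.inr ⟨x, Or.inl hxF, rfl⟩)

lemma reach_all (hM : IsMarkov M) {i : ℕ} (hi : i < n) :
    ∃ q, 1 ≤ q ∧ ∀ j < n, M.Reach q i j := by
  obtain ⟨q, hq⟩ := hM.aperiodic i hi
  have main : ∀ j < n, M.Reach q i j := by
    intro j hj
    obtain ⟨Fq, hFq, hsub⟩ := M.iter_subset hM hi q
    have hne : (Set.Ioo (M.cp j) (M.cm (j + 1)) \ Fq).Nonempty :=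
      ((Set.Ioo_infinite (M.cp_lt_cm j hj)).diff hFq).nonempty
    obtain ⟨x, hxIoo, hxF⟩ := hne
    have hxI : x ∈ M.Ipart j := ⟨hxIoo.1.le, hxIoo.2.le⟩
    have hxint : x ∈ interior (M.Ipart j) := by
      rw [M.interior_ipart_eq hj]; exact hxIoo
    have hxdom : x ∈ M.dom :=
      Set.mem_iUnion₂.2 ⟨j, Finset.mem_range.2 hj, hxI⟩
    rcases hsub (hq hxdom) with ⟨j', hreach, hxj'⟩ | (⟨k, hk1, hk2, hxk⟩ | hF)
    · rwa [M.interior_ipart_disj hj (M.reach_lt hi hreach) hxint hxj'] at hreach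
    · exact absurd hxk (fun h => M.interior_ipart_disj_epart hj hk1 hk2 hxint h)
    · exact absurd hF hxF
  refine ⟨q, ?_, main⟩
  rcases Nat.eq_zero_or_pos q with rfl | hq1
  · exfalso
    have h0 : M.Reach 0 i 0 := main 0 (by have := M.two_le; omega)
    have h1 : M.Reach 0 i 1 := main 1 (by have := M.two_le; omega)
    cases h0; cases h1
  · exact hq1

lemma reach_back (hM : IsMarkov M) : ∀ t : ℕ, ∀ j < n, ∃ s < n, M.Reach t s j := by
  have hn : 0 < n := by have := M.two_le; omega
  intro t
  induction t with
  | zero => exact fun j hj => ⟨j, hj, rfl⟩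
  | succ t ih =>
    intro j hj
    obtain ⟨q, hq1, hq⟩ := M.reach_all hM hn
    obtain ⟨q', rfl⟩ : ∃ q', q = q' + 1 := ⟨q - 1, by omega⟩
    obtain ⟨k, hk, he⟩ := hq j hj
    have hkn : k < n := M.reach_lt hn hk
    obtain ⟨s, hs, hst⟩ := ih k hkn
    exact ⟨s, hs, k, hst, he⟩

end MarkovSystem

lemma pos_of_reach {n : ℕ} (M : MarkovSystem n)
    (A : Matrix (Fin n) (Fin n) ℕ)
    (hA : ∀ i j : Fin n, A i j = if M.trans i j then 1 else 0) :
    ∀ (m : ℕ) (i j : Fin n), M.Reach m i j → 0 < (A ^ m) i j := by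
  intro m
  induction m with
  | zero =>
    intro i j h
    have : j = i := Fin.ext h
    subst this
    simp [Matrix.one_apply_eq]
  | succ m ih =>
    intro i j h
    obtain ⟨k, hk, hkn, htr⟩ := h
    have hkn' : k < n := M.reach_lt i.isLt hk
    set K : Fin n := ⟨k, hkn'⟩
    have h1 : 0 < (A ^ m) i K := ih i K hk
    have h2 : A K j = 1 := by rw [hA]; exact if_pos htr
    have h3 : 0 < (A ^ m) i K * A K j := by rw [h2]; omega
    calc 0 < (A ^ m) i K * A K j := h3
      _ ≤ ∑ x : Fin n, (A ^ m) i x * A x j :=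
          Finset.single_le_sum (f := fun x => (A ^ m) i x * A x j) (fun x _ => Nat.zero_le _) (Finset.mem_univ K)
      _ = (A ^ (m + 1)) i j := by rw [pow_succ, Matrix.mul_apply]
/-- The transition matrix of a Markov interval map is primitive: some power of
it has all entries strictly positive. -/
theorem transition_matrix_primitive {n : ℕ} (M : MarkovSystem n) (hM : IsMarkov M)
    (A : Matrix (Fin n) (Fin n) ℕ)
    (hA : ∀ i j : Fin n, A i j = if M.trans i j then 1 else 0) :
    ∃ m, 1 ≤ m ∧ ∀ i j : Fin n, 0 < (A ^ m) i j := by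
  have hn : 0 < n := by have := M.two_le; omega
  have hall : ∀ i : Fin n, ∃ q, 1 ≤ q ∧ ∀ j < n, M.Reach q i j :=
    fun i => M.reach_all hM i.isLt
  choose q hq1 hq using hall
  refine ⟨Finset.univ.sup q, le_trans (hq1 ⟨0, hn⟩)
    (Finset.le_sup (Finset.mem_univ (⟨0, hn⟩ : Fin n))), ?_⟩
  intro i j
  set m := Finset.univ.sup q with hm
  obtain ⟨s, hs, hst⟩ := M.reach_back hM (m - q i) j j.isLt
  have h1 : M.Reach (q i) i s := hq i s hs
  have h2 : M.Reach (q i + (m - q i)) (i : ℕ) (j : ℕ) := M.reach_trans h1 hst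
  have hle : q i ≤ m := Finset.le_sup (Finset.mem_univ i)
  have he : q i + (m - q i) = m := by omega
  rw [he] at h2
  exact pos_of_reach M A hA m i j h2
end
end
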